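/- arXiv:1007.2769 — 3 statements merged into one kernel-verified Lean document; each statement's English description precedes it below -/
import Mathlib

section
/- Fix m ≥ 1 and p_0, p_1 ∈ ℕ with p_0 + p_1 = m, and work in B_{2m} = G(2,2m). For S ⊆ Fin 2m let Δ_S = {v ∈ I(2,2m) : |v| is fixed-point-free and {i : z_i(v) = 0} = S}, and let C_S = Σ_{v ∈ Δ_S} C_v ∈ M. Then the subspace of M spanned by {C_S : |S| = 2p_0} is invariant under all the operators φ(g) for g ∈ B_{2m}, has dimension binomial(2m, 2p_0), and the resulting representation of B_{2m} on it is irreducible. -/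
noncomputable section

/-- The wreath product `G(r,n) = C_r ≀ S_n`, realized as pairs of a color vector
`z : Fin n → ZMod r` and a permutation `p` of `Fin n`. -/
@[ext] structure WreathG (r n : ℕ) where
  z : Fin n → ZMod r
  p : Equiv.Perm (Fin n)

namespace WreathG

variable {r n : ℕ}

instance : One (WreathG r n) := ⟨⟨0, 1⟩⟩
instance : Mul (WreathG r n) := ⟨fun g h => ⟨g.z + h.z ∘ g.p.symm, g.p * h.p⟩⟩
instance : Inv (WreathG r n) := ⟨fun g => ⟨-(g.z ∘ g.p), g.p⁻¹⟩⟩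

@[simp] theorem one_z : (1 : WreathG r n).z = 0 := rfl
@[simp] theorem one_p : (1 : WreathG r n).p = 1 := rfl
@[simp] theorem mul_z (a b : WreathG r n) : (a * b).z = a.z + b.z ∘ a.p.symm := rfl
@[simp] theorem mul_p (a b : WreathG r n) : (a * b).p = a.p * b.p := rfl
@[simp] theorem inv_z (a : WreathG r n) : (a⁻¹).z = -(a.z ∘ a.p) := rfl
@[simp] theorem inv_p (a : WreathG r n) : (a⁻¹).p = a.p⁻¹ := rfl

instance : Group (WreathG r n) :=
  Group.ofLeftAxioms
    (fun a b c => by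
      refine WreathG.ext ?_ (mul_assoc a.p b.p c.p)
      funext x
      show (a.z x + b.z (a.p.symm x)) + c.z ((a.p * b.p).symm x)
          = a.z x + (b.z (a.p.symm x) + c.z (b.p.symm (a.p.symm x)))
      have h : (a.p * b.p).symm x = b.p.symm (a.p.symm x) := rfl
      rw [h, add_assoc])
    (fun a => by
      refine WreathG.ext ?_ (one_mul a.p)
      funext x
      show 0 + a.z ((1 : Equiv.Perm (Fin n)).symm x) = a.z x
      rw [zero_add]; rfl)
    (fun a => by
      refine WreathG.ext ?_ (inv_mul_cancel a.p)
      funext x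
      show -(a.z (a.p x)) + a.z ((a.p⁻¹).symm x) = 0
      have h : (a.p⁻¹).symm x = a.p x := rfl
      rw [h, neg_add_cancel])

/-- An absolute involution of `G(r,n)`: `|v|² = 1` and `z ∘ |v| = z`. -/
def IsAbsInv (v : WreathG r n) : Prop := v.p ^ 2 = 1 ∧ v.z ∘ v.p = v.z

instance (v : WreathG r n) : Decidable (IsAbsInv v) :=
  inferInstanceAs (Decidable (_ ∧ _))

/-- Absolute conjugation `τ·(z,σ)·τ⁻¹ = (z ∘ τ⁻¹, τστ⁻¹)`. -/
def aconj (τ : Equiv.Perm (Fin n)) (v : WreathG r n) : WreathG r n :=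
  ⟨v.z ∘ τ.symm, τ * v.p * τ⁻¹⟩

theorem IsAbsInv.aconj {v : WreathG r n} (h : IsAbsInv v) (τ : Equiv.Perm (Fin n)) :
    IsAbsInv (WreathG.aconj τ v) := by
  obtain ⟨h1, h2⟩ := h
  constructor
  · show (τ * v.p * τ⁻¹) ^ 2 = 1
    have key : (τ * v.p * τ⁻¹) * (τ * v.p * τ⁻¹) = τ * (v.p * v.p) * τ⁻¹ := by
      simp [mul_assoc]
    rw [sq, key, ← sq, h1, mul_one, mul_inv_cancel]
  · funext x
    have := congrFun h2 (τ.symm x)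
    simpa [WreathG.aconj, Function.comp] using this

/-- `⟨g,v⟩ = ∑ i z_i(g)·z_i(v) ∈ ZMod r`. -/
def pairing (g v : WreathG r n) : ZMod r := ∑ i, g.z i * v.z i

/-- `inv_v(g)`: the number of pairs `i < j` with `|v|(i) = j` and `|g|(i) > |g|(j)`. -/
def invv (v g : WreathG r n) : ℕ :=
  Nat.card {q : Fin n × Fin n // q.1 < q.2 ∧ v.p q.1 = q.2 ∧ g.p q.2 < g.p q.1}

/-- The number of inversions of a permutation. -/
def invPerm (σ : Equiv.Perm (Fin n)) : ℕ :=
  Nat.card {q : Fin n × Fin n // q.1 < q.2 ∧ σ q.2 < σ q.1}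

/-- `fix_i(v)`: the number of `j` with `|v|(j) = j` and `z_j(v) = i`. -/
def fixc (v : WreathG r n) (i : ZMod r) : ℕ :=
  Nat.card {j : Fin n // v.p j = j ∧ v.z j = i}

/-- `pair_i(v)`: the number of pairs `j < k` with `|v|(j) = k` and `z_j(v) = z_k(v) = i`. -/
def pairc (v : WreathG r n) (i : ZMod r) : ℕ :=
  Nat.card {q : Fin n × Fin n // q.1 < q.2 ∧ v.p q.1 = q.2 ∧ v.z q.1 = i ∧ v.z q.2 = i}

instance : DecidableEq (WreathG r n) := fun a b =>
  decidable_of_iff (a.z = b.z ∧ a.p = b.p)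
    (by constructor
        · rintro ⟨h1, h2⟩; exact WreathG.ext h1 h2
        · rintro rfl; exact ⟨rfl, rfl⟩)

instance [NeZero r] : Fintype (WreathG r n) :=
  Fintype.ofEquiv ((Fin n → ZMod r) × Equiv.Perm (Fin n))
    { toFun := fun x => ⟨x.1, x.2⟩
      invFun := fun g => (g.z, g.p)
      left_inv := fun _ => rfl
      right_inv := fun _ => rfl }

end WreathG

/-- The set `I(r,n)` of absolute involutions, as a subtype. -/
abbrev AbsInv (r n : ℕ) := {v : WreathG r n // WreathG.IsAbsInv v}

/-- The model space `M`: the complex vector space with basis `{C_v : v ∈ I(r,n)}`. -/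
abbrev ModelSpace (r n : ℕ) := AbsInv r n →₀ ℂ

/-- `ζ_r = exp(2πi/r)`. -/
def zetaC (r : ℕ) : ℂ := Complex.exp (2 * Real.pi * Complex.I / r)

/-- `ζ_r` raised to an exponent in `ZMod r` (well defined since `ζ_r^r = 1`). -/
def zetaPow (r : ℕ) (a : ZMod r) : ℂ := zetaC r ^ a.val

/-- The Gelfand model operator `ϱ(g) C_v = ζ_r^{⟨g,v⟩} (−1)^{inv_v(g)} C_{|g|v|g|⁻¹}`. -/
def modelRho {r n : ℕ} (g : WreathG r n) :
    ModelSpace r n →ₗ[ℂ] ModelSpace r n :=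
  Finsupp.lsum ℂ fun v =>
    ((zetaPow r (WreathG.pairing g v.1) * (-1 : ℂ) ^ WreathG.invv v.1 g) •
      Finsupp.lsingle (⟨WreathG.aconj g.p v.1, v.2.aconj g.p⟩ : AbsInv r n))

/-- The auxiliary operator `φ(g) C_v = ζ_r^{⟨g,v⟩} C_{|g|v|g|⁻¹}`. -/
def modelPhi {r n : ℕ} (g : WreathG r n) :
    ModelSpace r n →ₗ[ℂ] ModelSpace r n :=
  Finsupp.lsum ℂ fun v =>
    ((zetaPow r (WreathG.pairing g v.1)) •
      Finsupp.lsingle (⟨WreathG.aconj g.p v.1, v.2.aconj g.p⟩ : AbsInv r n))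

/-- `(−1)` raised to an exponent in `ZMod 2`. -/
def negOnePow2 (a : ZMod 2) : ℂ := (-1 : ℂ) ^ a.val

/-- The Gelfand model operator for `B_n = G(2,n)`:
`ϱ(g) C_v = (−1)^{⟨g,v⟩} (−1)^{inv_v(g)} C_{|g|v|g|⁻¹}`. -/
def modelRho2 {n : ℕ} (g : WreathG 2 n) : ModelSpace 2 n →ₗ[ℂ] ModelSpace 2 n :=
  Finsupp.lsum ℂ fun v =>
    ((negOnePow2 (WreathG.pairing g v.1) * (-1 : ℂ) ^ WreathG.invv v.1 g) •
      Finsupp.lsingle (⟨WreathG.aconj g.p v.1, v.2.aconj g.p⟩ : AbsInv 2 n))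

/-- The auxiliary operator for `B_n = G(2,n)`: `φ(g) C_v = (−1)^{⟨g,v⟩} C_{|g|v|g|⁻¹}`. -/
def modelPhi2 {n : ℕ} (g : WreathG 2 n) : ModelSpace 2 n →ₗ[ℂ] ModelSpace 2 n :=
  Finsupp.lsum ℂ fun v =>
    ((negOnePow2 (WreathG.pairing g v.1)) •
      Finsupp.lsingle (⟨WreathG.aconj g.p v.1, v.2.aconj g.p⟩ : AbsInv 2 n))

/-- `Δ_S`: the set of involutions of `B_{2m}` whose underlying permutation is
fixed-point-free and whose set of `0`-colored positions is exactly `S`. -/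
def DeltaS {m : ℕ} (S : Finset (Fin (2 * m))) : Finset (AbsInv 2 (2 * m)) :=
  Finset.univ.filter fun v =>
    (∀ j, v.1.p j ≠ j) ∧ (Finset.univ.filter fun i => v.1.z i = 0) = S

/-- `C_S = ∑_{v ∈ Δ_S} C_v`. -/
def CS {m : ℕ} (S : Finset (Fin (2 * m))) : ModelSpace 2 (2 * m) :=
  ∑ v ∈ DeltaS S, Finsupp.single v 1

section Aux

open Finset

lemma zmod2_cases : ∀ a : ZMod 2, a = 0 ∨ a = 1 := by decide

lemma negOnePow2_zero : negOnePow2 0 = 1 := rfl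

lemma negOnePow2_one : negOnePow2 1 = -1 := by
  show (-1 : ℂ) ^ (1 : ZMod 2).val = -1
  norm_num [show (1 : ZMod 2).val = 1 from rfl]

lemma negOnePow2_add (a b : ZMod 2) : negOnePow2 (a + b) = negOnePow2 a * negOnePow2 b := by
  rcases zmod2_cases a with rfl | rfl <;> rcases zmod2_cases b with rfl | rfl
  · rw [add_zero, negOnePow2_zero, mul_one]
  · rw [zero_add, negOnePow2_zero, one_mul]
  · rw [add_zero, negOnePow2_zero, mul_one]
  · rw [show ((1:ZMod 2) + 1) = 0 by decide, negOnePow2_zero, negOnePow2_one]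
    norm_num

lemma negOnePow2_mul_self (a : ZMod 2) : negOnePow2 a * negOnePow2 a = 1 := by
  rcases zmod2_cases a with rfl | rfl <;> norm_num [negOnePow2_zero, negOnePow2_one]

variable {m : ℕ}

lemma mem_DeltaS {S : Finset (Fin (2*m))} {v : AbsInv 2 (2*m)} :
    v ∈ DeltaS S ↔ (∀ j, v.1.p j ≠ j) ∧ (Finset.univ.filter fun i => v.1.z i = 0) = S := by
  simp [DeltaS]

lemma DeltaS_eq_of_mem {S T : Finset (Fin (2*m))} {v : AbsInv 2 (2*m)}
    (hS : v ∈ DeltaS S) (hT : v ∈ DeltaS T) : S = T :=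
  (mem_DeltaS.1 hS).2.symm.trans (mem_DeltaS.1 hT).2

lemma z_eq_of_mem {S : Finset (Fin (2*m))} {v : AbsInv 2 (2*m)} (hv : v ∈ DeltaS S) (i : Fin (2*m)) :
    v.1.z i = if i ∈ S then 0 else 1 := by
  have h := (mem_DeltaS.1 hv).2
  by_cases hi : i ∈ S
  · rw [if_pos hi, ← h] at *
    simpa using (Finset.mem_filter.1 hi).2
  · rw [if_neg hi]
    rcases zmod2_cases (v.1.z i) with h0 | h1
    · exact absurd (h ▸ Finset.mem_filter.2 ⟨Finset.mem_univ i, h0⟩) hi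
    · exact h1

lemma aconj_aconj_inv {n : ℕ} (τ : Equiv.Perm (Fin n)) (v : WreathG 2 n) :
    WreathG.aconj τ⁻¹ (WreathG.aconj τ v) = v := by
  refine WreathG.ext ?_ ?_
  · funext x
    show v.z (τ.symm ((τ⁻¹).symm x)) = v.z x
    have h : (τ⁻¹ : Equiv.Perm (Fin n)).symm x = τ x := rfl
    rw [h, Equiv.symm_apply_apply]
  · show τ⁻¹ * (τ * v.p * τ⁻¹) * (τ⁻¹)⁻¹ = v.p
    group

lemma aconj_mem_DeltaS {S : Finset (Fin (2*m))} {v : AbsInv 2 (2*m)} (hv : v ∈ DeltaS S)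
    (τ : Equiv.Perm (Fin (2*m))) :
    (⟨WreathG.aconj τ v.1, v.2.aconj τ⟩ : AbsInv 2 (2*m)) ∈ DeltaS (S.image τ) := by
  obtain ⟨h1, h2⟩ := mem_DeltaS.1 hv
  refine mem_DeltaS.2 ⟨?_, ?_⟩
  · intro j hj
    have hj' : τ (v.1.p (τ⁻¹ j)) = j := hj
    have : v.1.p (τ⁻¹ j) = τ⁻¹ j := by
      have := congrArg τ.symm hj'
      simpa using this
    exact h1 _ this
  · ext i
    simp only [Finset.mem_filter, Finset.mem_univ, true_and, Finset.mem_image]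
    constructor
    · intro hz
      refine ⟨τ.symm i, ?_, by simp⟩
      rw [← h2]
      exact Finset.mem_filter.2 ⟨Finset.mem_univ _, hz⟩
    · rintro ⟨a, ha, rfl⟩
      have hz : v.1.z a = 0 := by
        rw [← h2] at ha
        exact (Finset.mem_filter.1 ha).2
      show v.1.z (τ.symm (τ a)) = 0
      simpa using hz

lemma image_perm_inv {N : ℕ} (τ : Equiv.Perm (Fin N)) (S : Finset (Fin N)) :
    (S.image τ).image ⇑τ⁻¹ = S := by
  rw [Finset.image_image]
  have : (⇑τ⁻¹ ∘ ⇑τ) = id := by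
    funext x
    simp
  rw [this, Finset.image_id]

lemma pairing_mem {S : Finset (Fin (2*m))} {v : AbsInv 2 (2*m)} (hv : v ∈ DeltaS S)
    (g : WreathG 2 (2*m)) :
    WreathG.pairing g v.1 = ∑ i ∈ Sᶜ, g.z i := by
  unfold WreathG.pairing
  rw [← Finset.sum_add_sum_compl S]
  have h0 : ∑ i ∈ S, g.z i * v.1.z i = 0 :=
    Finset.sum_eq_zero fun i hi => by rw [z_eq_of_mem hv i, if_pos hi, mul_zero]
  have h1 : ∑ i ∈ Sᶜ, g.z i * v.1.z i = ∑ i ∈ Sᶜ, g.z i :=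
    Finset.sum_congr rfl fun i hi => by
      rw [z_eq_of_mem hv i, if_neg (Finset.mem_compl.1 hi), mul_one]
  rw [h0, h1, zero_add]

lemma modelPhi2_single {n : ℕ} (g : WreathG 2 n) (v : AbsInv 2 n) :
    modelPhi2 g (Finsupp.single v 1) =
      negOnePow2 (WreathG.pairing g v.1) •
        Finsupp.single (⟨WreathG.aconj g.p v.1, v.2.aconj g.p⟩ : AbsInv 2 n) (1:ℂ) := by
  simp [modelPhi2, Finsupp.lsum_single]

lemma modelPhi2_CS (g : WreathG 2 (2*m)) (S : Finset (Fin (2*m))) :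
    modelPhi2 g (CS S) = negOnePow2 (∑ i ∈ Sᶜ, g.z i) • CS (S.image g.p) := by
  unfold CS
  rw [map_sum, Finset.smul_sum]
  refine Finset.sum_nbij'
    (fun v => (⟨WreathG.aconj g.p v.1, v.2.aconj g.p⟩ : AbsInv 2 (2*m)))
    (fun w => (⟨WreathG.aconj g.p⁻¹ w.1, w.2.aconj g.p⁻¹⟩ : AbsInv 2 (2*m)))
    (fun v hv => aconj_mem_DeltaS hv g.p)
    ?_ ?_ ?_ ?_
  · intro w hw
    have h := aconj_mem_DeltaS hw g.p⁻¹
    rwa [show ⇑(g.p⁻¹) = ⇑(g.p)⁻¹ from rfl, image_perm_inv] at h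
  · intro v _
    exact Subtype.ext (aconj_aconj_inv g.p v.1)
  · intro w _
    refine Subtype.ext ?_
    have := aconj_aconj_inv g.p⁻¹ w.1
    rwa [inv_inv] at this
  · intro v hv
    rw [modelPhi2_single, pairing_mem hv]

lemma CS_apply (S : Finset (Fin (2*m))) (w : AbsInv 2 (2*m)) :
    CS S w = if w ∈ DeltaS S then 1 else 0 := by
  unfold CS
  rw [Finsupp.finset_sum_apply]
  rw [Finset.sum_congr rfl fun v _ => Finsupp.single_apply (a := v) (b := (1:ℂ)) (a' := w)]
  exact Finset.sum_ite_eq' (DeltaS S) w (fun _ => (1:ℂ))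

/-- the basic fixed-point-free pairing `2i ↔ 2i+1` -/
def pairFlip (m : ℕ) (j : Fin (2*m)) : Fin (2*m) :=
  if h : j.val % 2 = 0 then ⟨j.val + 1, by have := j.isLt; omega⟩
  else ⟨j.val - 1, by have := j.isLt; omega⟩

lemma pairFlip_val (m : ℕ) (j : Fin (2*m)) :
    (pairFlip m j).val = if j.val % 2 = 0 then j.val + 1 else j.val - 1 := by
  unfold pairFlip
  split_ifs <;> rfl

lemma pairFlip_involutive (m : ℕ) : Function.Involutive (pairFlip m) := by
  intro j
  apply Fin.ext
  rw [pairFlip_val, pairFlip_val]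
  have := j.isLt
  split_ifs <;> omega

def baseV (m k : ℕ) : WreathG 2 (2*m) :=
  ⟨fun i => if i.val < k then 0 else 1, (pairFlip_involutive m).toPerm⟩

lemma baseV_isAbsInv (m k : ℕ) (hk : k % 2 = 0) : (baseV m k).IsAbsInv := by
  constructor
  · refine Equiv.ext fun j => ?_
    rw [sq, Equiv.Perm.mul_apply, Equiv.Perm.one_apply]
    exact pairFlip_involutive m j
  · funext j
    show (if (pairFlip m j).val < k then (0:ZMod 2) else 1) = if j.val < k then 0 else 1
    have := j.isLt
    rw [pairFlip_val]
    split_ifs <;> first | rfl | (exfalso; omega)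

lemma baseV_mem (m k : ℕ) (hk : k % 2 = 0) :
    (⟨baseV m k, baseV_isAbsInv m k hk⟩ : AbsInv 2 (2*m)) ∈
      DeltaS (Finset.univ.filter fun i => i.val < k) := by
  refine mem_DeltaS.2 ⟨?_, ?_⟩
  · intro j h
    have hval := congrArg Fin.val h
    rw [show ((baseV m k).p j) = pairFlip m j from rfl, pairFlip_val] at hval
    have := j.isLt
    revert hval
    split_ifs <;> omega
  · ext i
    simp only [Finset.mem_filter, Finset.mem_univ, true_and]
    show (if i.val < k then (0:ZMod 2) else 1) = 0 ↔ i.val < k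
    split_ifs with h <;> simp [h]

lemma card_filter_lt (m k : ℕ) (hk : k ≤ 2*m) :
    (Finset.univ.filter fun i : Fin (2*m) => i.val < k).card = k := by
  have himg : (Finset.univ.filter fun i : Fin (2*m) => i.val < k) =
      Finset.map (Fin.castLEEmb hk) Finset.univ := by
    ext i
    simp only [Finset.mem_filter, Finset.mem_univ, true_and, Finset.mem_map]
    constructor
    · intro h
      exact ⟨⟨i.val, h⟩, Fin.ext rfl⟩
    · rintro ⟨j, rfl⟩
      exact j.isLt
  rw [himg, Finset.card_map, Finset.card_univ, Fintype.card_fin]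

lemma exists_perm_image {N : ℕ} {S T : Finset (Fin N)} (h : S.card = T.card) :
    ∃ τ : Equiv.Perm (Fin N), S.image τ = T := by
  classical
  have hc : Sᶜ.card = Tᶜ.card := by rw [Finset.card_compl, Finset.card_compl, h]
  let e₁ : {x // x ∈ S} ≃ {x // x ∈ T} := Finset.equivOfCardEq h
  let e₂ : {x // ¬ x ∈ S} ≃ {x // ¬ x ∈ T} :=
    ((Equiv.subtypeEquivRight fun x => (Finset.mem_compl (s := S)).symm).trans
      (Finset.equivOfCardEq hc)).trans
      (Equiv.subtypeEquivRight fun x => Finset.mem_compl (s := T))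
  let τ : Equiv.Perm (Fin N) :=
    (Equiv.sumCompl (· ∈ S)).symm.trans ((e₁.sumCongr e₂).trans (Equiv.sumCompl (· ∈ T)))
  have hpos : ∀ x, x ∈ S → τ x ∈ T := by
    intro x hx
    show (Equiv.sumCompl (· ∈ T)) ((e₁.sumCongr e₂) ((Equiv.sumCompl (· ∈ S)).symm x)) ∈ T
    rw [Equiv.sumCompl_symm_apply_of_pos hx]
    simpa using (e₁ ⟨x, hx⟩).2
  have hneg : ∀ x, x ∉ S → τ x ∉ T := by
    intro x hx
    show (Equiv.sumCompl (· ∈ T)) ((e₁.sumCongr e₂) ((Equiv.sumCompl (· ∈ S)).symm x)) ∉ T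
    rw [Equiv.sumCompl_symm_apply_of_neg hx]
    simpa using (e₂ ⟨x, hx⟩).2
  refine ⟨τ, Finset.Subset.antisymm ?_ ?_⟩
  · intro y hy
    rw [Finset.mem_image] at hy
    obtain ⟨x, hx, rfl⟩ := hy
    exact hpos x hx
  · intro y hy
    rw [Finset.mem_image]
    refine ⟨τ.symm y, ?_, τ.apply_symm_apply y⟩
    by_contra hxs
    exact hneg _ hxs (by rw [τ.apply_symm_apply]; exact hy)

lemma DeltaS_nonempty {p₀ : ℕ} (S : Finset (Fin (2*m))) (hS : S.card = 2*p₀) :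
    (DeltaS S).Nonempty := by
  have hk : 2*p₀ ≤ 2*m := by
    have h := Finset.card_le_card (Finset.subset_univ S)
    rwa [hS, Finset.card_univ, Fintype.card_fin] at h
  have hS₀ : (Finset.univ.filter fun i : Fin (2*m) => i.val < 2*p₀).card = 2*p₀ :=
    card_filter_lt m _ hk
  obtain ⟨τ, hτ⟩ := exists_perm_image (hS₀.trans hS.symm)
  have hbase := baseV_mem m (2*p₀) (by omega)
  have h := aconj_mem_DeltaS hbase τ
  rw [hτ] at h
  exact ⟨_, h⟩

/-- the character `χ_S(z) = (−1)^{∑_{i ∉ S} z_i}` -/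
def chiS {N : ℕ} (S : Finset (Fin N)) (z : Fin N → ZMod 2) : ℂ := negOnePow2 (∑ i ∈ Sᶜ, z i)

lemma modelPhi2_diag (z : Fin (2*m) → ZMod 2) (S : Finset (Fin (2*m))) :
    modelPhi2 (⟨z, 1⟩ : WreathG 2 (2*m)) (CS S) = chiS S z • CS S := by
  rw [modelPhi2_CS]
  have h : S.image ⇑((⟨z, 1⟩ : WreathG 2 (2*m)).p) = S := by
    show S.image ⇑(1 : Equiv.Perm (Fin (2*m))) = S
    simp
  rw [h]
  rfl

lemma modelPhi2_perm (τ : Equiv.Perm (Fin (2*m))) (S : Finset (Fin (2*m))) :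
    modelPhi2 (⟨0, τ⟩ : WreathG 2 (2*m)) (CS S) = CS (S.image τ) := by
  rw [modelPhi2_CS]
  have h : ∑ i ∈ Sᶜ, (⟨(0 : Fin (2*m) → ZMod 2), τ⟩ : WreathG 2 (2*m)).z i = 0 :=
    Finset.sum_eq_zero fun i _ => rfl
  rw [h, negOnePow2_zero, one_smul]

lemma chiS_orth {N : ℕ} (S T : Finset (Fin N)) :
    ∑ z : Fin N → ZMod 2, chiS S z * chiS T z
      = if S = T then ((Fintype.card (Fin N → ZMod 2) : ℂ)) else 0 := by
  unfold chiS
  by_cases hST : S = T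
  · subst hST
    rw [if_pos rfl, Finset.sum_congr rfl fun z _ => negOnePow2_mul_self _]
    simp
  · rw [if_neg hST]
    obtain ⟨t, ht⟩ : ∃ t, ¬ (t ∈ Sᶜ ↔ t ∈ Tᶜ) := by
      by_contra hall
      push_neg at hall
      exact hST (by simpa using congrArg compl (Finset.ext fun a => hall a))
    set δ : Fin N → ZMod 2 := fun i => if i = t then 1 else 0 with hδ
    have hsum : ∀ (A : Finset (Fin N)) (z : Fin N → ZMod 2),
        ∑ i ∈ A, (δ + z) i = (if t ∈ A then 1 else 0) + ∑ i ∈ A, z i := by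
      intro A z
      simp only [Pi.add_apply, Finset.sum_add_distrib]
      congr 1
      simp [hδ]
    have key : ∀ z : Fin N → ZMod 2,
        negOnePow2 (∑ i ∈ Sᶜ, (δ + z) i) * negOnePow2 (∑ i ∈ Tᶜ, (δ + z) i)
          = -(negOnePow2 (∑ i ∈ Sᶜ, z i) * negOnePow2 (∑ i ∈ Tᶜ, z i)) := by
      intro z
      rw [hsum, hsum, negOnePow2_add, negOnePow2_add]
      by_cases h1 : t ∈ Sᶜ <;> by_cases h2 : t ∈ Tᶜ
      · exact absurd (iff_of_true h1 h2) ht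
      · simp only [if_pos h1, if_neg h2, negOnePow2_one, negOnePow2_zero]; ring
      · simp only [if_neg h1, if_pos h2, negOnePow2_one, negOnePow2_zero]; ring
      · exact absurd (iff_of_false h1 h2) ht
    have hflip : ∑ z : Fin N → ZMod 2, negOnePow2 (∑ i ∈ Sᶜ, z i) * negOnePow2 (∑ i ∈ Tᶜ, z i)
        = -∑ z : Fin N → ZMod 2,
            negOnePow2 (∑ i ∈ Sᶜ, z i) * negOnePow2 (∑ i ∈ Tᶜ, z i) := by
      conv_lhs => rw [← Equiv.sum_comp (Equiv.addLeft δ)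
        (fun z : Fin N → ZMod 2 => negOnePow2 (∑ i ∈ Sᶜ, z i) * negOnePow2 (∑ i ∈ Tᶜ, z i))]
      have hthis : ∀ z : Fin N → ZMod 2,
          negOnePow2 (∑ i ∈ Sᶜ, (Equiv.addLeft δ z) i) * negOnePow2 (∑ i ∈ Tᶜ, (Equiv.addLeft δ z) i)
            = -(negOnePow2 (∑ i ∈ Sᶜ, z i) * negOnePow2 (∑ i ∈ Tᶜ, z i)) := by
        intro z
        rw [Equiv.coe_addLeft]
        exact key z
      rw [Finset.sum_congr rfl fun z _ => hthis z, Finset.sum_neg_distrib]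
    linear_combination hflip / 2

end Aux


/-- The span of the vectors `C_S` with `|S| = 2p₀` is a `φ`-invariant
subspace of `M` of dimension `binomial(2m, 2p₀)`, and the resulting representation of
`B_{2m}` on it is irreducible. -/
theorem span_CS_irreducible (m p₀ p₁ : ℕ) (hm : 1 ≤ m) (hs : p₀ + p₁ = m) :
    ∀ W : Submodule ℂ (ModelSpace 2 (2 * m)),
      W = Submodule.span ℂ
          {x | ∃ S : Finset (Fin (2 * m)), S.card = 2 * p₀ ∧ x = CS S} →
      (∀ g : WreathG 2 (2 * m), ∀ x ∈ W, modelPhi2 g x ∈ W) ∧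
      Module.finrank ℂ W = Nat.choose (2 * m) (2 * p₀) ∧
      W ≠ ⊥ ∧
      (∀ U : Submodule ℂ (ModelSpace 2 (2 * m)), U ≤ W →
        (∀ g : WreathG 2 (2 * m), ∀ x ∈ U, modelPhi2 g x ∈ U) → U = ⊥ ∨ U = W) := by
  intro W hW
  classical
  have hk : 2*p₀ ≤ 2*m := by omega
  -- the index type of subsets of size 2p₀
  let ι := {S : Finset (Fin (2*m)) // S.card = 2*p₀}
  let f : ι → ModelSpace 2 (2*m) := fun S => CS S.1
  have hrange : {x | ∃ S : Finset (Fin (2*m)), S.card = 2 * p₀ ∧ x = CS S} = Set.range f := by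
    ext x
    constructor
    · rintro ⟨S, hS, rfl⟩
      exact ⟨⟨S, hS⟩, rfl⟩
    · rintro ⟨⟨S, hS⟩, rfl⟩
      exact ⟨S, hS, rfl⟩
  have hWspan : W = Submodule.span ℂ (Set.range f) := by rw [hW, hrange]
  -- choose representatives
  have hrep : ∀ S : ι, ∃ v, v ∈ DeltaS S.1 := fun S => DeltaS_nonempty S.1 S.2
  choose vSel hvSel using hrep
  have hCSapply : ∀ S T : ι, CS T.1 (vSel S) = if T = S then 1 else 0 := by
    intro S T
    rw [CS_apply]
    by_cases hTS : T = S
    · subst hTS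
      rw [if_pos (hvSel T), if_pos rfl]
    · rw [if_neg hTS, if_neg]
      intro hmem
      exact hTS (Subtype.ext (DeltaS_eq_of_mem hmem (hvSel S)))
  -- linear independence
  have hli : LinearIndependent ℂ f := by
    rw [Fintype.linearIndependent_iff]
    intro c hc S
    have hc' : ∑ T : ι, c T • CS T.1 = (0 : ModelSpace 2 (2*m)) := hc
    have h2 : ∑ T : ι, c T * (CS T.1 (vSel S)) = 0 := by
      have h2' := DFunLike.congr_fun hc' (vSel S)
      rw [Finsupp.finset_sum_apply] at h2'
      simpa [Finsupp.smul_apply, smul_eq_mul] using h2'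
    rw [Finset.sum_congr rfl
      (fun T _ => by rw [hCSapply S T, mul_ite, mul_one, mul_zero])] at h2
    rwa [Finset.sum_ite_eq' Finset.univ S c, if_pos (Finset.mem_univ S)] at h2
  have hcard : Fintype.card ι = (2*m).choose (2*p₀) := by
    rw [Fintype.card_subtype]
    have heq : (Finset.univ.filter fun S : Finset (Fin (2*m)) => S.card = 2*p₀)
        = Finset.powersetCard (2*p₀) Finset.univ := by
      ext S
      simp [Finset.mem_powersetCard, Finset.subset_univ]
    rw [heq, Finset.card_powersetCard, Finset.card_univ, Fintype.card_fin]
  -- invariance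
  have hinv : ∀ g : WreathG 2 (2*m), ∀ x ∈ W, modelPhi2 g x ∈ W := by
    intro g x hx
    have hmap : modelPhi2 g x ∈ Submodule.map (modelPhi2 g) W := Submodule.mem_map_of_mem hx
    rw [hW, Submodule.map_span] at hmap
    rw [hW]
    refine Submodule.span_le.2 ?_ hmap
    rintro _ ⟨y, ⟨S, hS, rfl⟩, rfl⟩
    rw [modelPhi2_CS]
    refine Submodule.smul_mem _ _ (Submodule.subset_span ?_)
    exact ⟨S.image g.p, by rw [Finset.card_image_of_injective _ g.p.injective, hS], rfl⟩
  refine ⟨hinv, ?_, ?_, ?_⟩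
  · rw [hWspan, finrank_span_eq_card hli, hcard]
  · -- W ≠ ⊥
    obtain ⟨S₁, -, hS₁⟩ := Finset.exists_subset_card_eq (s := (Finset.univ : Finset (Fin (2*m)))) (n := 2*p₀)
      (by rw [Finset.card_univ, Fintype.card_fin]; exact hk)
    intro hbot
    have hmem : CS S₁ ∈ W := hW ▸ Submodule.subset_span ⟨S₁, hS₁, rfl⟩
    rw [hbot, Submodule.mem_bot] at hmem
    have := DFunLike.congr_fun hmem (vSel ⟨S₁, hS₁⟩)
    rw [hCSapply ⟨S₁, hS₁⟩ ⟨S₁, hS₁⟩, if_pos rfl] at this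
    exact one_ne_zero this
  · -- irreducibility
    intro U hUW hUinv
    by_cases hU : U = ⊥
    · exact Or.inl hU
    right
    obtain ⟨x, hxU, hx0⟩ := (Submodule.ne_bot_iff U).1 hU
    have hxW : x ∈ Submodule.span ℂ (Set.range f) := hWspan ▸ hUW hxU
    rw [Submodule.mem_span_range_iff_exists_fun] at hxW
    obtain ⟨c, hc⟩ := hxW
    have hc' : ∑ T : ι, c T • CS T.1 = x := hc
    have hcS : ∃ S : ι, c S ≠ 0 := by
      by_contra hall
      push_neg at hall
      refine hx0 ?_
      rw [← hc']
      exact Finset.sum_eq_zero fun T _ => by rw [hall, zero_smul]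
    obtain ⟨S₀, hS₀⟩ := hcS
    have hNne : ((Fintype.card (Fin (2*m) → ZMod 2) : ℂ)) ≠ 0 :=
      Nat.cast_ne_zero.2 Fintype.card_ne_zero
    set y := ∑ z : Fin (2*m) → ZMod 2, chiS S₀.1 z • modelPhi2 (⟨z, 1⟩ : WreathG 2 (2*m)) x
      with hy
    have hyU : y ∈ U :=
      Submodule.sum_mem _ fun z _ => Submodule.smul_mem _ _ (hUinv _ _ hxU)
    have hyval : y = ((Fintype.card (Fin (2*m) → ZMod 2) : ℂ) * c S₀) • CS S₀.1 := by
      calc y = ∑ z : Fin (2*m) → ZMod 2,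
            chiS S₀.1 z • modelPhi2 (⟨z, 1⟩ : WreathG 2 (2*m)) (∑ T : ι, c T • CS T.1) := by
              rw [hc']
        _ = ∑ z : Fin (2*m) → ZMod 2, ∑ T : ι, (c T * (chiS S₀.1 z * chiS T.1 z)) • CS T.1 := by
              refine Finset.sum_congr rfl fun z _ => ?_
              rw [map_sum, Finset.smul_sum]
              refine Finset.sum_congr rfl fun T _ => ?_
              rw [map_smul, modelPhi2_diag, smul_smul, smul_smul]
              ring_nf
        _ = ∑ T : ι, (c T * ∑ z : Fin (2*m) → ZMod 2, chiS S₀.1 z * chiS T.1 z) • CS T.1 := by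
              rw [Finset.sum_comm]
              refine Finset.sum_congr rfl fun T _ => ?_
              rw [Finset.mul_sum, ← Finset.sum_smul]
        _ = ∑ T : ι, (c T * if S₀.1 = T.1 then (Fintype.card (Fin (2*m) → ZMod 2) : ℂ) else 0)
              • CS T.1 := by
              refine Finset.sum_congr rfl fun T _ => ?_
              rw [chiS_orth]
        _ = ((Fintype.card (Fin (2*m) → ZMod 2) : ℂ) * c S₀) • CS S₀.1 := by
              rw [Finset.sum_eq_single S₀]
              · rw [if_pos rfl, mul_comm (c S₀) ((Fintype.card (Fin (2*m) → ZMod 2) : ℂ))]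
              · intro T _ hT
                rw [if_neg (fun h => hT (Subtype.ext h.symm)), mul_zero, zero_smul]
              · intro h
                exact absurd (Finset.mem_univ S₀) h
    have hCS₀ : CS S₀.1 ∈ U := by
      have hsm : ((Fintype.card (Fin (2*m) → ZMod 2) : ℂ) * c S₀)⁻¹ • y ∈ U :=
        Submodule.smul_mem _ _ hyU
      rwa [hyval, smul_smul, inv_mul_cancel₀ (mul_ne_zero hNne hS₀), one_smul] at hsm
    have hall : ∀ S : ι, CS S.1 ∈ U := by
      intro S
      obtain ⟨τ, hτ⟩ := exists_perm_image (S₀.2.trans S.2.symm)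
      have hphi := hUinv (⟨0, τ⟩ : WreathG 2 (2*m)) _ hCS₀
      rwa [modelPhi2_perm, hτ] at hphi
    refine le_antisymm hUW ?_
    rw [hWspan]
    refine Submodule.span_le.2 ?_
    rintro _ ⟨S, rfl⟩
    exact hall S
end
end

section
/- Fix r ≥ 1, m ≥ 1 and p_0,…,p_{r−1} ∈ ℕ with p_0 + ⋯ + p_{r−1} = m, and work in G(r,2m). For an r-tuple (S_0,…,S_{r−1}) of pairwise disjoint subsets of Fin 2m with union Fin 2m, let Δ_{S_0,…,S_{r−1}} = {v ∈ I(r,2m) : |v| is fixed-point-free and {i : z_i(v) = j} = S_j for every j ∈ {0,…,r−1}}, and let C_{S_0,…,S_{r−1}} = Σ_{v ∈ Δ_{S_0,…,S_{r−1}}} C_v ∈ M. Then the subspace of M spanned by all C_{S_0,…,S_{r−1}} with |S_j| = 2p_j for every j is invariant under all the operators φ(g) for g ∈ G(r,2m), and the resulting representation of G(r,2m) on it is irreducible. -/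
noncomputable section

/-- `Δ_{S_0,…,S_{r−1}}`: the set of absolute involutions of `G(r,2m)` whose underlying
permutation is fixed-point-free and whose set of `j`-colored positions is exactly `S j`. -/
def DeltaT {r m : ℕ} [NeZero r] (S : Fin r → Finset (Fin (2 * m))) :
    Finset (AbsInv r (2 * m)) :=
  Finset.univ.filter fun v =>
    (∀ j, v.1.p j ≠ j) ∧
    ∀ j : Fin r, (Finset.univ.filter fun i => v.1.z i = (j.val : ZMod r)) = S j

/-- `C_{S_0,…,S_{r−1}} = ∑_{v ∈ Δ_{S_0,…,S_{r−1}}} C_v`. -/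
def CT {r m : ℕ} [NeZero r] (S : Fin r → Finset (Fin (2 * m))) : ModelSpace r (2 * m) :=
  ∑ v ∈ DeltaT S, Finsupp.single v 1

section Helpers

variable {r : ℕ} [NeZero r]

theorem zetaC_pow_r : (zetaC r) ^ r = 1 :=
  (Complex.isPrimitiveRoot_exp r (NeZero.ne r)).pow_eq_one

theorem zetaC_pow_mod (n : ℕ) : zetaC r ^ (n % r) = zetaC r ^ n := by
  conv_rhs => rw [← Nat.div_add_mod n r]
  rw [pow_add, pow_mul, zetaC_pow_r, one_pow, one_mul]

theorem zetaPow_add (a b : ZMod r) : zetaPow r (a + b) = zetaPow r a * zetaPow r b := by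
  unfold zetaPow
  rw [ZMod.val_add, zetaC_pow_mod, pow_add]

omit [NeZero r] in
theorem zetaPow_zero : zetaPow r 0 = 1 := by
  unfold zetaPow; simp

theorem zetaPow_sum {ι : Type*} (s : Finset ι) (f : ι → ZMod r) :
    zetaPow r (∑ i ∈ s, f i) = ∏ i ∈ s, zetaPow r (f i) := by
  classical
  induction s using Finset.induction_on with
  | empty => simp [zetaPow_zero]
  | insert _ _ h ih => rw [Finset.sum_insert h, Finset.prod_insert h, zetaPow_add, ih]

theorem char_sum (c : ZMod r) :
    ∑ a : ZMod r, zetaPow r (a * c) = if c = 0 then (r : ℂ) else 0 := by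
  split_ifs with h
  · subst h
    simp only [mul_zero, zetaPow_zero]
    simp [ZMod.card]
  · have key : ∀ a : ZMod r, zetaPow r (a * c) = (zetaC r ^ c.val) ^ a.val := by
      intro a
      unfold zetaPow
      rw [← pow_mul, ZMod.val_mul, zetaC_pow_mod, mul_comm]
    simp_rw [key]
    have hrw : ∑ a : ZMod r, (zetaC r ^ c.val) ^ a.val
        = ∑ i ∈ Finset.range r, (zetaC r ^ c.val) ^ i := by
      refine Finset.sum_nbij' (fun a => a.val) (fun i => (i : ZMod r)) ?_ ?_ ?_ ?_ ?_
      · intro a _; exact Finset.mem_range.mpr a.val_lt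
      · intro i _; exact Finset.mem_univ _
      · intro a _; simp [ZMod.natCast_val, ZMod.cast_id]
      · intro i hi; exact ZMod.val_cast_of_lt (Finset.mem_range.mp hi)
      · intro a _; rfl
    rw [hrw]
    have hne : zetaC r ^ c.val ≠ 1 := by
      intro h1
      have := (Complex.isPrimitiveRoot_exp r (NeZero.ne r)).pow_eq_one_iff_dvd c.val
      have hdvd : r ∣ c.val := (this.mp h1)
      have : c.val = 0 := Nat.eq_zero_of_dvd_of_lt hdvd c.val_lt
      exact h (by rwa [ZMod.val_eq_zero] at this)
    rw [geom_sum_eq hne, ← pow_mul, mul_comm, pow_mul, zetaC_pow_r, one_pow]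
    simp

theorem big_char_sum (n : ℕ) (c : Fin n → ZMod r) :
    ∑ z : Fin n → ZMod r, zetaPow r (∑ i, z i * c i)
      = if c = 0 then ((r : ℂ)) ^ n else 0 := by
  have h1 : ∀ z : Fin n → ZMod r, zetaPow r (∑ i, z i * c i)
      = ∏ i, zetaPow r (z i * c i) := fun z => zetaPow_sum _ _
  simp_rw [h1]
  have h2 := Finset.prod_univ_sum (fun _ : Fin n => (Finset.univ : Finset (ZMod r)))
    (fun i a => zetaPow r (a * c i))
  rw [Fintype.piFinset_univ] at h2
  rw [← h2]
  simp_rw [char_sum]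
  by_cases hc : c = 0
  · subst hc; simp
  · rw [if_neg hc]
    obtain ⟨i, hi⟩ := Function.ne_iff.mp hc
    refine Finset.prod_eq_zero (Finset.mem_univ i) ?_
    exact if_neg hi

end Helpers
section Model

open WreathG Finset

variable {r n m : ℕ} [NeZero r]

omit [NeZero r] in
theorem aconj_one (v : WreathG r n) : WreathG.aconj 1 v = v := by
  refine WreathG.ext ?_ ?_
  · funext i; rfl
  · show (1 : Equiv.Perm (Fin n)) * v.p * 1⁻¹ = v.p
    group

omit [NeZero r] in
theorem aconj_mul (τ τ' : Equiv.Perm (Fin n)) (v : WreathG r n) :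
    WreathG.aconj τ (WreathG.aconj τ' v) = WreathG.aconj (τ * τ') v := by
  refine WreathG.ext ?_ ?_
  · funext i; rfl
  · show τ * (τ' * v.p * τ'⁻¹) * τ⁻¹ = (τ * τ') * v.p * (τ * τ')⁻¹
    group

omit [NeZero r] in
theorem modelPhi_single (g : WreathG r n) (v : AbsInv r n) (c : ℂ) :
    modelPhi g (Finsupp.single v c)
      = zetaPow r (WreathG.pairing g v.1) •
          Finsupp.single (⟨WreathG.aconj g.p v.1, v.2.aconj g.p⟩ : AbsInv r n) c := by
  unfold modelPhi
  rw [Finsupp.lsum_single]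
  rfl

omit [NeZero r] in
theorem pairing_congr (g : WreathG r n) {v w : WreathG r n} (h : v.z = w.z) :
    WreathG.pairing g v = WreathG.pairing g w := by
  unfold WreathG.pairing; rw [h]

omit [NeZero r] in
theorem modelPhi_diag (g : WreathG r n) (hg : g.p = 1) (x : ModelSpace r n) (v : AbsInv r n) :
    modelPhi g x v = zetaPow r (WreathG.pairing g v.1) * x v := by
  induction x using Finsupp.induction_linear with
  | zero => simp
  | add f h hf hh => rw [map_add, Finsupp.add_apply, hf, hh, Finsupp.add_apply, mul_add]
  | single w c =>
      rw [modelPhi_single]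
      have hw' : (⟨WreathG.aconj g.p w.1, w.2.aconj g.p⟩ : AbsInv r n) = w :=
        Subtype.ext (by rw [hg]; exact aconj_one _)
      rw [hw', Finsupp.smul_apply, smul_eq_mul]
      rcases eq_or_ne v w with h | h
      · subst h; rfl
      · rw [Finsupp.single_eq_of_ne h, mul_zero, mul_zero]

theorem CT_apply (S : Fin r → Finset (Fin (2 * m))) (v : AbsInv r (2 * m)) :
    CT S v = if v ∈ DeltaT S then 1 else 0 := by
  unfold CT
  rw [Finset.sum_apply']
  simp [Finsupp.single_apply]

theorem mem_DeltaT {S : Fin r → Finset (Fin (2 * m))} {v : AbsInv r (2 * m)} :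
    v ∈ DeltaT S ↔ (∀ j, v.1.p j ≠ j) ∧
      ∀ j : Fin r, (Finset.univ.filter fun i => v.1.z i = (j.val : ZMod r)) = S j := by
  simp [DeltaT]

theorem exists_fin_color (c : ZMod r) : ∃ j : Fin r, ((j.val : ℕ) : ZMod r) = c :=
  ⟨⟨c.val, c.val_lt⟩, by simp [ZMod.natCast_val, ZMod.cast_id]⟩

omit [NeZero r] in
theorem finCast_inj {j k : Fin r} (h : ((j.val : ℕ) : ZMod r) = ((k.val : ℕ) : ZMod r)) :
    j = k := by
  have := congrArg ZMod.val h
  rw [ZMod.val_cast_of_lt j.isLt, ZMod.val_cast_of_lt k.isLt] at this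
  exact Fin.ext this

theorem z_eq_of_filters {v w : WreathG r n}
    (h : ∀ j : Fin r, (Finset.univ.filter fun i => v.z i = (j.val : ZMod r))
        = (Finset.univ.filter fun i => w.z i = (j.val : ZMod r))) :
    v.z = w.z := by
  funext i
  obtain ⟨j, hj⟩ := exists_fin_color (v.z i)
  have hi : i ∈ Finset.univ.filter fun i => v.z i = (j.val : ZMod r) :=
    Finset.mem_filter.mpr ⟨Finset.mem_univ _, hj.symm⟩
  rw [h j] at hi
  rw [(Finset.mem_filter.mp hi).2, hj]

theorem z_eq_of_mem_DeltaT {S : Fin r → Finset (Fin (2 * m))} {v w : AbsInv r (2 * m)}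
    (hv : v ∈ DeltaT S) (hw : w ∈ DeltaT S) : v.1.z = w.1.z := by
  rw [mem_DeltaT] at hv hw
  exact z_eq_of_filters fun j => by rw [hv.2 j, hw.2 j]

theorem aconj_mem_DeltaT {S : Fin r → Finset (Fin (2 * m))} (τ : Equiv.Perm (Fin (2 * m)))
    {v : AbsInv r (2 * m)} (hv : v ∈ DeltaT S) :
    (⟨WreathG.aconj τ v.1, v.2.aconj τ⟩ : AbsInv r (2 * m))
      ∈ DeltaT (fun j => (S j).image τ) := by
  rw [mem_DeltaT] at hv ⊢
  obtain ⟨h1, h2⟩ := hv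
  constructor
  · intro j hj
    have hj' : τ (v.1.p (τ.symm j)) = j := hj
    apply h1 (τ.symm j)
    have := congrArg τ.symm hj'
    rwa [Equiv.symm_apply_apply] at this
  · intro j
    rw [← h2 j]
    ext i
    simp only [Finset.mem_filter, Finset.mem_univ, true_and, Finset.mem_image]
    constructor
    · intro hz
      exact ⟨τ.symm i, hz, Equiv.apply_symm_apply _ _⟩
    · rintro ⟨a, ha, rfl⟩
      show v.1.z (τ.symm (τ a)) = _
      rwa [Equiv.symm_apply_apply]

theorem phi_CT (g : WreathG r (2 * m)) (S : Fin r → Finset (Fin (2 * m))) :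
    ∃ c : ℂ, modelPhi g (CT S) = c • CT (fun j => (S j).image g.p) := by
  by_cases hS : (DeltaT S).Nonempty
  · obtain ⟨v₀, hv₀⟩ := hS
    refine ⟨zetaPow r (WreathG.pairing g v₀.1), ?_⟩
    unfold CT
    rw [map_sum, Finset.smul_sum]
    simp_rw [modelPhi_single]
    refine Finset.sum_nbij'
      (fun v => (⟨WreathG.aconj g.p v.1, v.2.aconj g.p⟩ : AbsInv r (2 * m)))
      (fun w => (⟨WreathG.aconj g.p⁻¹ w.1, w.2.aconj g.p⁻¹⟩ : AbsInv r (2 * m)))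
      (fun v hv => aconj_mem_DeltaT g.p hv) ?_ ?_ ?_ ?_
    · intro w hw
      have := aconj_mem_DeltaT (S := fun j => (S j).image g.p) g.p⁻¹ hw
      convert this using 2
      funext j
      rw [Finset.image_image]
      have : (⇑g.p⁻¹ ∘ ⇑g.p) = id := by
        funext x; simp
      rw [this, Finset.image_id]
    · intro v _
      refine Subtype.ext ?_
      show WreathG.aconj g.p⁻¹ (WreathG.aconj g.p v.1) = v.1
      rw [aconj_mul, inv_mul_cancel, aconj_one]
    · intro w _
      refine Subtype.ext ?_
      show WreathG.aconj g.p (WreathG.aconj g.p⁻¹ w.1) = w.1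
      rw [aconj_mul, mul_inv_cancel, aconj_one]
    · intro v hv
      rw [pairing_congr g (z_eq_of_mem_DeltaT hv hv₀)]
  · rw [Finset.not_nonempty_iff_eq_empty] at hS
    refine ⟨0, ?_⟩
    rw [zero_smul]
    unfold CT
    rw [hS, Finset.sum_empty, map_zero]

theorem phi_perm_CT (σ : Equiv.Perm (Fin (2 * m))) (S : Fin r → Finset (Fin (2 * m))) :
    modelPhi (⟨0, σ⟩ : WreathG r (2 * m)) (CT S) = CT (fun j => (S j).image σ) := by
  unfold CT
  rw [map_sum]
  simp_rw [modelPhi_single]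
  have hpair : ∀ v : AbsInv r (2 * m),
      WreathG.pairing (⟨0, σ⟩ : WreathG r (2 * m)) v.1 = 0 := by
    intro v
    unfold WreathG.pairing
    simp [show (⟨0, σ⟩ : WreathG r (2 * m)).z = 0 from rfl]
  simp_rw [hpair, zetaPow_zero, one_smul]
  refine Finset.sum_nbij'
    (fun v => (⟨WreathG.aconj σ v.1, v.2.aconj σ⟩ : AbsInv r (2 * m)))
    (fun w => (⟨WreathG.aconj σ⁻¹ w.1, w.2.aconj σ⁻¹⟩ : AbsInv r (2 * m)))
    (fun v hv => aconj_mem_DeltaT σ hv) ?_ ?_ ?_ ?_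
  · intro w hw
    have := aconj_mem_DeltaT (S := fun j => (S j).image σ) σ⁻¹ hw
    convert this using 2
    funext j
    rw [Finset.image_image]
    have : (⇑σ⁻¹ ∘ ⇑σ) = id := by funext x; simp
    rw [this, Finset.image_id]
  · intro v _
    refine Subtype.ext ?_
    show WreathG.aconj σ⁻¹ (WreathG.aconj σ v.1) = v.1
    rw [aconj_mul, inv_mul_cancel, aconj_one]
  · intro w _
    refine Subtype.ext ?_
    show WreathG.aconj σ (WreathG.aconj σ⁻¹ w.1) = w.1
    rw [aconj_mul, mul_inv_cancel, aconj_one]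
  · intro v _
    rfl

end Model
section Construct

open Finset

/-- fiber of the first projection in a sigma type -/
def sigmaFiberFst {ι : Type*} {β : ι → Type*} (j : ι) :
    {s : Σ i, β i // s.1 = j} ≃ β j where
  toFun s := s.2 ▸ s.1.2
  invFun b := ⟨⟨j, b⟩, rfl⟩
  left_inv := by rintro ⟨⟨i, b⟩, rfl⟩; rfl
  right_inv := by intro b; rfl

def prodSubtypeSnd {α β : Type*} (q : β → Prop) : {x : α × β // q x.2} ≃ α × {b // q b} where
  toFun s := (s.1.1, ⟨s.1.2, s.2⟩)
  invFun x := ⟨(x.1, x.2.1), x.2.2⟩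
  left_inv := by rintro ⟨⟨a, b⟩, h⟩; rfl
  right_inv := by rintro ⟨a, ⟨b, h⟩⟩; rfl

variable {r : ℕ} [NeZero r]

omit [NeZero r] in
theorem exists_perm_of_partitions {k : ℕ} {S T : Fin r → Finset (Fin k)}
    (hSd : ∀ j j', j ≠ j' → Disjoint (S j) (S j')) (hSc : ∀ i, ∃ j, i ∈ S j)
    (hTd : ∀ j j', j ≠ j' → Disjoint (T j) (T j')) (hTc : ∀ i, ∃ j, i ∈ T j)
    (hcard : ∀ j, (S j).card = (T j).card) :
    ∃ σ : Equiv.Perm (Fin k), ∀ j, (S j).image σ = T j := by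
  classical
  let colS : Fin k → Fin r := fun i => (hSc i).choose
  let colT : Fin k → Fin r := fun i => (hTc i).choose
  have hcolS : ∀ i j, i ∈ S j ↔ colS i = j := by
    intro i j
    constructor
    · intro hij
      by_contra hne
      exact (Finset.disjoint_left.mp (hSd _ _ hne)) (hSc i).choose_spec hij
    · rintro rfl; exact (hSc i).choose_spec
  have hcolT : ∀ i j, i ∈ T j ↔ colT i = j := by
    intro i j
    constructor
    · intro hij
      by_contra hne
      exact (Finset.disjoint_left.mp (hTd _ _ hne)) (hTc i).choose_spec hij
    · rintro rfl; exact (hTc i).choose_spec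
  have hcardS : ∀ j, Fintype.card {i // colS i = j} = (S j).card := by
    intro j
    rw [Fintype.card_subtype]
    congr 1
    ext i
    simp [← hcolS i j]
  have hcardT : ∀ j, Fintype.card {i // colT i = j} = (T j).card := by
    intro j
    rw [Fintype.card_subtype]
    congr 1
    ext i
    simp [← hcolT i j]
  let e : ∀ j, {i // colS i = j} ≃ {i // colT i = j} := fun j =>
    Fintype.equivOfCardEq (by rw [hcardS, hcardT, hcard])
  let σ : Equiv.Perm (Fin k) :=
    ((Equiv.sigmaFiberEquiv colS).symm.trans (Equiv.sigmaCongrRight e)).trans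
      (Equiv.sigmaFiberEquiv colT)
  have hσ : ∀ i, σ i = (e (colS i) ⟨i, rfl⟩).1 := fun i => rfl
  have hcolσ : ∀ i, colT (σ i) = colS i := by
    intro i
    rw [hσ]
    exact (e (colS i) ⟨i, rfl⟩).2
  refine ⟨σ, fun j => ?_⟩
  apply Finset.eq_of_subset_of_card_le
  · intro x hx
    obtain ⟨i, hi, rfl⟩ := Finset.mem_image.mp hx
    rw [hcolT]
    rw [hcolσ]
    exact (hcolS i j).mp hi
  · rw [Finset.card_image_of_injective _ σ.injective, hcard]

theorem exists_good_Delta (m : ℕ) (p : Fin r → ℕ) (hp : ∑ j, p j = m) :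
    ∃ S₀ : Fin r → Finset (Fin (2 * m)),
      (∀ j k, j ≠ k → Disjoint (S₀ j) (S₀ k)) ∧
      (∀ i, ∃ j, i ∈ S₀ j) ∧
      (∀ j, (S₀ j).card = 2 * p j) ∧
      (DeltaT S₀).Nonempty := by
  classical
  -- the coloring of Fin m with fiber sizes p j
  let E : (Σ j : Fin r, Fin (p j)) ≃ Fin m :=
    Fintype.equivOfCardEq (by simp [Fintype.card_sigma, hp])
  let cfun : Fin m → Fin r := fun k => (E.symm k).1
  have hcfib : ∀ j, Fintype.card {k // cfun k = j} = p j := by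
    intro j
    have e1 : {k // cfun k = j} ≃ {s : Σ j : Fin r, Fin (p j) // s.1 = j} :=
      Equiv.subtypeEquiv E.symm (fun a => Iff.rfl)
    rw [Fintype.card_congr (e1.trans (sigmaFiberFst j))]
    simp
  -- the fixed-point-free involution
  let e2 : Fin 2 × Fin m ≃ Fin (2 * m) := finProdFinEquiv
  let f : Equiv.Perm (Fin 2 × Fin m) :=
    Equiv.prodCongr (Equiv.swap (0 : Fin 2) 1) (Equiv.refl (Fin m))
  let p₀ : Equiv.Perm (Fin (2 * m)) := e2.permCongr f
  have hff : ∀ x, f (f x) = x := by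
    rintro ⟨a, b⟩
    show (Equiv.swap (0 : Fin 2) 1 (Equiv.swap (0 : Fin 2) 1 a), b) = (a, b)
    rw [Equiv.swap_apply_self]
  have hfsnd : ∀ x : Fin 2 × Fin m, (f x).2 = x.2 := by rintro ⟨a, b⟩; rfl
  have hp₀ : ∀ i, p₀ i = e2 (f (e2.symm i)) := fun i => rfl
  have hp₀sq : p₀ ^ 2 = 1 := by
    refine Equiv.ext fun i => ?_
    rw [sq, Equiv.Perm.mul_apply, Equiv.Perm.one_apply, hp₀, hp₀, Equiv.symm_apply_apply,
      hff, Equiv.apply_symm_apply]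
  have hp₀fpf : ∀ i, p₀ i ≠ i := by
    intro i hi
    rw [hp₀] at hi
    have h2 : f (e2.symm i) = e2.symm i := by
      have := congrArg e2.symm hi
      rwa [Equiv.symm_apply_apply] at this
    have h3 : Equiv.swap (0 : Fin 2) 1 (e2.symm i).1 = (e2.symm i).1 :=
      congrArg Prod.fst h2
    revert h3
    have : ∀ a : Fin 2, Equiv.swap (0 : Fin 2) 1 a ≠ a := by decide
    exact this _
  -- the color vector
  let z₀ : Fin (2 * m) → ZMod r := fun i => ((cfun ((e2.symm i).2)).val : ZMod r)
  have hz₀p : z₀ ∘ p₀ = z₀ := by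
    funext i
    show z₀ (p₀ i) = z₀ i
    rw [hp₀]
    show ((cfun ((e2.symm (e2 (f (e2.symm i)))).2)).val : ZMod r)
        = ((cfun ((e2.symm i).2)).val : ZMod r)
    rw [Equiv.symm_apply_apply, hfsnd]
  let v₀ : WreathG r (2 * m) := ⟨z₀, p₀⟩
  have hv₀ : WreathG.IsAbsInv v₀ := ⟨hp₀sq, hz₀p⟩
  let S₀ : Fin r → Finset (Fin (2 * m)) := fun j =>
    Finset.univ.filter fun i => v₀.z i = (j.val : ZMod r)
  have hmemS₀ : ∀ i j, i ∈ S₀ j ↔ cfun ((e2.symm i).2) = j := by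
    intro i j
    unfold S₀
    simp only [Finset.mem_filter, Finset.mem_univ, true_and]
    constructor
    · intro h; exact finCast_inj h.symm |>.symm
    · intro h; rw [← h]
  refine ⟨S₀, ?_, ?_, ?_, ⟨v₀, hv₀⟩, ?_⟩
  · intro j k hjk
    rw [Finset.disjoint_left]
    intro i hij hik
    exact hjk (((hmemS₀ i j).mp hij).symm.trans ((hmemS₀ i k).mp hik))
  · intro i
    exact ⟨_, (hmemS₀ i _).mpr rfl⟩
  · intro j
    have : (S₀ j).card = Fintype.card {i // cfun ((e2.symm i).2) = j} := by
      rw [Fintype.card_subtype]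
      congr 1
      ext i
      simp [hmemS₀ i j]
    rw [this]
    have e3 : {i // cfun ((e2.symm i).2) = j} ≃ Fin 2 × {k // cfun k = j} :=
      (Equiv.subtypeEquiv e2.symm (fun a => Iff.rfl)).trans
        (prodSubtypeSnd (fun b => cfun b = j))
    rw [Fintype.card_congr e3, Fintype.card_prod, hcfib]
    simp
  · rw [mem_DeltaT]
    exact ⟨hp₀fpf, fun j => rfl⟩

end Construct

/-- The span of the vectors `C_{S_0,…,S_{r−1}}`, where `(S_0,…,S_{r−1})`
ranges over tuples of pairwise disjoint subsets of `Fin 2m` with union everything and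
`|S_j| = 2p_j`, is a `φ`-invariant subspace of `M`, and the resulting representation of
`G(r,2m)` on it is irreducible. -/
theorem span_CT_irreducible (r m : ℕ) [NeZero r] (hm : 1 ≤ m)
    (p : Fin r → ℕ) (hp : ∑ j, p j = m) :
    ∀ W : Submodule ℂ (ModelSpace r (2 * m)),
      W = Submodule.span ℂ
          {x | ∃ S : Fin r → Finset (Fin (2 * m)),
            (∀ j k, j ≠ k → Disjoint (S j) (S k)) ∧
            (∀ i, ∃ j, i ∈ S j) ∧
            (∀ j, (S j).card = 2 * p j) ∧ x = CT S} →
      (∀ g : WreathG r (2 * m), ∀ x ∈ W, modelPhi g x ∈ W) ∧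
      W ≠ ⊥ ∧
      (∀ U : Submodule ℂ (ModelSpace r (2 * m)), U ≤ W →
        (∀ g : WreathG r (2 * m), ∀ x ∈ U, modelPhi g x ∈ U) → U = ⊥ ∨ U = W) := by
  classical
  intro W hW
  subst hW
  set X : Set (ModelSpace r (2 * m)) :=
    {x | ∃ S : Fin r → Finset (Fin (2 * m)),
      (∀ j k, j ≠ k → Disjoint (S j) (S k)) ∧
      (∀ i, ∃ j, i ∈ S j) ∧
      (∀ j, (S j).card = 2 * p j) ∧ x = CT S} with hXdef
  -- Invariance
  have hInv : ∀ g : WreathG r (2 * m), ∀ x ∈ Submodule.span ℂ X,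
      modelPhi g x ∈ Submodule.span ℂ X := by
    intro g x hx
    induction hx using Submodule.span_induction with
    | mem x hxX =>
        obtain ⟨S, hd, hc, hcard, rfl⟩ := hxX
        obtain ⟨c, hc'⟩ := phi_CT g S
        rw [hc']
        refine Submodule.smul_mem _ _ (Submodule.subset_span ?_)
        refine ⟨fun j => (S j).image g.p, ?_, ?_, ?_, rfl⟩
        · intro j k hjk
          rw [Finset.disjoint_image g.p.injective]
          exact hd j k hjk
        · intro i
          obtain ⟨j, hj⟩ := hc (g.p.symm i)
          exact ⟨j, Finset.mem_image.mpr ⟨g.p.symm i, hj, Equiv.apply_symm_apply _ _⟩⟩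
        · intro j
          rw [Finset.card_image_of_injective _ g.p.injective]
          exact hcard j
    | zero => simp
    | add x y hx hy ihx ihy => rw [map_add]; exact Submodule.add_mem _ ihx ihy
    | smul a x hx ih => rw [map_smul]; exact Submodule.smul_mem _ _ ih
  refine ⟨hInv, ?_, ?_⟩
  -- Nontriviality
  · obtain ⟨S₀, h1, h2, h3, v₀, hv₀⟩ := exists_good_Delta m p hp
    have hmem : CT S₀ ∈ Submodule.span ℂ X :=
      Submodule.subset_span ⟨S₀, h1, h2, h3, rfl⟩
    have hval : CT S₀ v₀ = 1 := by rw [CT_apply, if_pos hv₀]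
    intro hbot
    rw [hbot, Submodule.mem_bot] at hmem
    rw [hmem] at hval
    simp at hval
  -- Irreducibility
  · intro U hUW hUinv
    by_cases hU0 : U = ⊥
    · exact Or.inl hU0
    right
    -- the structure of elements of the span
    have hQ : ∀ x ∈ Submodule.span ℂ X,
        (∀ v ∈ x.support, (∀ j, v.1.p j ≠ j) ∧
          (∀ j : Fin r,
            (Finset.univ.filter fun i => v.1.z i = (j.val : ZMod r)).card = 2 * p j)) ∧
        (∀ v w : AbsInv r (2 * m), v.1.z = w.1.z →
          (∀ j, v.1.p j ≠ j) → (∀ j, w.1.p j ≠ j) → x v = x w) := by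
      intro x hx
      induction hx using Submodule.span_induction with
      | mem x hxX =>
          obtain ⟨S, hd, hc, hcard, rfl⟩ := hxX
          constructor
          · intro v hv
            have hvC : CT S v ≠ 0 := Finsupp.mem_support_iff.mp hv
            rw [CT_apply] at hvC
            have hvΔ : v ∈ DeltaT S := by
              by_contra hn
              rw [if_neg hn] at hvC
              exact hvC rfl
            rw [mem_DeltaT] at hvΔ
            refine ⟨hvΔ.1, fun j => ?_⟩
            rw [hvΔ.2 j]
            exact hcard j
          · intro v w hz hvf hwf
            rw [CT_apply, CT_apply]
            have : v ∈ DeltaT S ↔ w ∈ DeltaT S := by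
              rw [mem_DeltaT, mem_DeltaT]
              constructor
              · rintro ⟨-, hfil⟩
                refine ⟨hwf, fun j => ?_⟩
                rw [← hfil j]
                congr 1
                funext i
                rw [hz]
              · rintro ⟨-, hfil⟩
                refine ⟨hvf, fun j => ?_⟩
                rw [← hfil j]
                congr 1
                funext i
                rw [hz]
            rw [if_congr this rfl rfl]
      | zero => exact ⟨fun v hv => absurd hv (by simp), fun v w _ _ _ => rfl⟩
      | add x y hx hy ihx ihy =>
          constructor
          · intro v hv
            rcases Finset.mem_union.mp (Finsupp.support_add hv) with h | h
            · exact ihx.1 v h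
            · exact ihy.1 v h
          · intro v w hz hvf hwf
            rw [Finsupp.add_apply, Finsupp.add_apply, ihx.2 v w hz hvf hwf,
              ihy.2 v w hz hvf hwf]
      | smul a x hx ih =>
          constructor
          · intro v hv
            exact ih.1 v (Finsupp.support_smul hv)
          · intro v w hz hvf hwf
            rw [Finsupp.smul_apply, Finsupp.smul_apply, ih.2 v w hz hvf hwf]
    -- pick a nonzero element of U
    obtain ⟨x, hxU, hx0⟩ := Submodule.ne_bot_iff U |>.mp hU0
    have hxW : x ∈ Submodule.span ℂ X := hUW hxU
    obtain ⟨vs, hvs⟩ : ∃ v, x v ≠ 0 := by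
      by_contra hn
      push_neg at hn
      exact hx0 (Finsupp.ext hn)
    have hvs_supp : vs ∈ x.support := Finsupp.mem_support_iff.mpr hvs
    have hQx := hQ x hxW
    have hvs_f := (hQx.1 vs hvs_supp).1
    have hvs_c := (hQx.1 vs hvs_supp).2
    set Ss : Fin r → Finset (Fin (2 * m)) :=
      fun j => Finset.univ.filter fun i => vs.1.z i = (j.val : ZMod r) with hSs
    -- the averaged element
    set y : ModelSpace r (2 * m) :=
      ∑ z : Fin (2 * m) → ZMod r,
        zetaPow r (-(WreathG.pairing (⟨z, 1⟩ : WreathG r (2 * m)) vs.1)) •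
          modelPhi (⟨z, 1⟩ : WreathG r (2 * m)) x with hy
    have hyU : y ∈ U :=
      Submodule.sum_mem _ fun z _ =>
        Submodule.smul_mem _ _ (hUinv _ _ hxU)
    have hyval : ∀ v' : AbsInv r (2 * m),
        y v' = (if v'.1.z = vs.1.z then ((r : ℂ)) ^ (2 * m) else 0) * x v' := by
      intro v'
      have h1 : y v' = ∑ z : Fin (2 * m) → ZMod r,
          zetaPow r (-(WreathG.pairing (⟨z, 1⟩ : WreathG r (2 * m)) vs.1)) *
            (zetaPow r (WreathG.pairing (⟨z, 1⟩ : WreathG r (2 * m)) v'.1) * x v') := by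
        rw [hy, Finset.sum_apply']
        refine Finset.sum_congr rfl fun z _ => ?_
        rw [Finsupp.smul_apply, smul_eq_mul, modelPhi_diag _ rfl]
      rw [h1]
      have h2 : ∀ z : Fin (2 * m) → ZMod r,
          zetaPow r (-(WreathG.pairing (⟨z, 1⟩ : WreathG r (2 * m)) vs.1)) *
            (zetaPow r (WreathG.pairing (⟨z, 1⟩ : WreathG r (2 * m)) v'.1) * x v')
          = zetaPow r (∑ i, z i * (v'.1.z i - vs.1.z i)) * x v' := by
        intro z
        rw [← mul_assoc, ← zetaPow_add]
        congr 2
        show -(∑ i, z i * vs.1.z i) + (∑ i, z i * v'.1.z i) = _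
        rw [neg_add_eq_sub, ← Finset.sum_sub_distrib]
        refine Finset.sum_congr rfl fun i _ => ?_
        rw [mul_sub]
      simp_rw [h2]
      rw [← Finset.sum_mul, big_char_sum]
      congr 1
      refine if_congr ?_ rfl rfl
      constructor
      · intro h
        funext i
        have := congrFun h i
        exact sub_eq_zero.mp this
      · intro h
        funext i
        rw [congrFun h i]
        simp
    -- identify y with a multiple of CT Ss
    have hkey : y = (((r : ℂ)) ^ (2 * m) * x vs) • CT Ss := by
      refine Finsupp.ext fun v' => ?_
      rw [Finsupp.smul_apply, CT_apply, smul_eq_mul, hyval v']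
      by_cases hz : v'.1.z = vs.1.z
      · rw [if_pos hz]
        by_cases hf : ∀ j, v'.1.p j ≠ j
        · have hmem : v' ∈ DeltaT Ss := by
            rw [mem_DeltaT]
            refine ⟨hf, fun j => ?_⟩
            rw [hSs]
            congr 1
            funext i
            rw [hz]
          rw [if_pos hmem, hQx.2 v' vs hz hf hvs_f]
          ring
        · have hx' : x v' = 0 := by
            by_contra hn
            exact hf ((hQx.1 v' (Finsupp.mem_support_iff.mpr hn)).1)
          have hmem : v' ∉ DeltaT Ss := by
            rw [mem_DeltaT]
            rintro ⟨hf', -⟩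
            exact hf hf'
          rw [if_neg hmem, hx']
          ring
      · rw [if_neg hz]
        have hmem : v' ∉ DeltaT Ss := by
          rw [mem_DeltaT]
          rintro ⟨-, hfil⟩
          refine hz (z_eq_of_filters fun j => ?_)
          rw [hfil j, hSs]
        rw [if_neg hmem]
        ring
    have hscal : (((r : ℂ)) ^ (2 * m) * x vs) ≠ 0 := by
      refine mul_ne_zero (pow_ne_zero _ ?_) hvs
      exact_mod_cast Nat.cast_ne_zero.mpr (NeZero.ne r)
    have hCT_U : CT Ss ∈ U := by
      have : ((((r : ℂ)) ^ (2 * m) * x vs)⁻¹ * (((r : ℂ)) ^ (2 * m) * x vs)) • CT Ss ∈ U := by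
        rw [mul_smul, ← hkey]
        exact Submodule.smul_mem _ _ hyU
      rwa [inv_mul_cancel₀ hscal, one_smul] at this
    -- Ss is an admissible tuple
    have hSsd : ∀ j k, j ≠ k → Disjoint (Ss j) (Ss k) := by
      intro j k hjk
      rw [Finset.disjoint_left]
      intro i hij hik
      rw [hSs] at hij hik
      have h1 := (Finset.mem_filter.mp hij).2
      have h2 := (Finset.mem_filter.mp hik).2
      exact hjk (finCast_inj (h1.symm.trans h2))
    have hSsc : ∀ i, ∃ j, i ∈ Ss j := by
      intro i
      obtain ⟨j, hj⟩ := exists_fin_color (vs.1.z i)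
      exact ⟨j, Finset.mem_filter.mpr ⟨Finset.mem_univ _, hj.symm⟩⟩
    have hSscard : ∀ j, (Ss j).card = 2 * p j := fun j => hvs_c j
    -- every generator of the span lies in U
    have hXU : X ⊆ (U : Set (ModelSpace r (2 * m))) := by
      rintro x' ⟨S', hd', hc', hcard', rfl⟩
      obtain ⟨σ, hσ⟩ := exists_perm_of_partitions hSsd hSsc hd' hc'
        (fun j => by rw [hSscard j, hcard' j])
      have := hUinv (⟨0, σ⟩ : WreathG r (2 * m)) _ hCT_U
      rw [phi_perm_CT] at this
      have heq : (fun j => (Ss j).image σ) = S' := funext hσ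
      rwa [heq] at this
    exact le_antisymm hUW (Submodule.span_le.mpr hXU)
end
end

section
/- Fix m ≥ 1 and work inside B_{2m} = G(2,2m). Let B_{2m−1} = {g ∈ B_{2m} : |g|(2m) = 2m and z_{2m}(g) = 0} and B_{2m−2} = {g ∈ B_{2m} : |g|(j) = j and z_j(g) = 0 for j ∈ {2m−1, 2m}}. Let I⁰_{2m} = {v ∈ I(2,2m) : |v| is fixed-point-free} and I⁰_{2m−2} = {v ∈ I(2,2m) : |v|(j) = j and z_j(v) = 0 for j ∈ {2m−1,2m}, and |v|(j) ≠ j for all j ≤ 2m−2}. Then for every g ∈ B_{2m−1}: 2^{2m−2}·(2m−2)! · Σ_{v ∈ I⁰_{2m}, |g|v|g|⁻¹ = v} (−1)^{⟨g,v⟩} = Σ_{x ∈ B_{2m−1} with x⁻¹gx ∈ B_{2m−2}} Σ_{w ∈ I⁰_{2m−2}, |x⁻¹gx| w |x⁻¹gx|⁻¹ = w} (−1)^{⟨x⁻¹gx, w⟩}. (This identity of class functions says that the character of the restriction to B_{2m−1} of the representation φ of B_{2m} on the span of {C_v : v ∈ I⁰_{2m}} equals the character of the representation of B_{2m−1} induced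 from the representation φ of B_{2m−2} on the span of {C_w : w ∈ I⁰_{2m−2}}.) -/
noncomputable section

/-! ### Auxiliary material for Statement 7 -/

namespace Stmt7Aux

open Finset Equiv

variable {n : ℕ}

/-- basic ZMod 2 case split -/
lemma zmod2_cases (s : ZMod 2) : s = 0 ∨ s = 1 := by revert s; decide

lemma zmod2_add_self (s : ZMod 2) : s + s = 0 := by revert s; decide

lemma zmod2_eq_one_of_ne {s : ZMod 2} (h : s ≠ 0) : s = 1 := by
  rcases zmod2_cases s with h0 | h1
  · exact absurd h0 h
  · exact h1

lemma negOnePow2_add_one (s : ZMod 2) : negOnePow2 (s + 1) = - negOnePow2 s := by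
  rcases zmod2_cases s with rfl | rfl
  · rw [show ((0 : ZMod 2) + 1) = 1 by decide]
    show ((-1 : ℂ)) ^ (1 : ZMod 2).val = -((-1 : ℂ) ^ (0 : ZMod 2).val)
    norm_num [show (1 : ZMod 2).val = 1 from rfl, show (0 : ZMod 2).val = 0 from rfl]
  · rw [show ((1 : ZMod 2) + 1) = 0 by decide]
    show ((-1 : ℂ)) ^ (0 : ZMod 2).val = -((-1 : ℂ) ^ (1 : ZMod 2).val)
    norm_num [show (1 : ZMod 2).val = 1 from rfl, show (0 : ZMod 2).val = 0 from rfl]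

lemma negOnePow2_ne_zero (s : ZMod 2) : negOnePow2 s ≠ 0 := by
  rcases zmod2_cases s with rfl | rfl <;>
    simp [negOnePow2, show (1 : ZMod 2).val = 1 from rfl, show (0 : ZMod 2).val = 0 from rfl]

/-! #### conjugation in the wreath product -/

lemma conj_p (x g : WreathG 2 n) : (x⁻¹ * g * x).p = x.p⁻¹ * g.p * x.p := by simp

lemma conj_p_apply (x g : WreathG 2 n) (i : Fin n) :
    (x⁻¹ * g * x).p i = x.p⁻¹ (g.p (x.p i)) := by
  rw [conj_p]; rfl

lemma conj_z_apply (x g : WreathG 2 n) (i : Fin n) :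
    (x⁻¹ * g * x).z i = -x.z (x.p i) + g.z (x.p i) + x.z (g.p⁻¹ (x.p i)) := by
  show ((x⁻¹ * g).z + x.z ∘ ((x⁻¹ * g).p).symm) i = _
  have h1 : (x⁻¹ * g).z i = -(x.z (x.p i)) + g.z (x.p i) := rfl
  have h2 : ((x⁻¹ * g).p).symm i = g.p⁻¹ (x.p i) := rfl
  simp only [Pi.add_apply, Function.comp_apply, h1, h2]

/-! #### swap commutation -/

lemma swap_comm_of_fix {a b : Fin n} (σ : Perm (Fin n)) (ha : σ a = a) (hb : σ b = b) :
    σ * Equiv.swap a b = Equiv.swap a b * σ := by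
  ext j
  simp only [Equiv.Perm.mul_apply]
  rcases eq_or_ne j a with rfl | hja
  · rw [Equiv.swap_apply_left, hb, ha, Equiv.swap_apply_left]
  rcases eq_or_ne j b with rfl | hjb
  · rw [Equiv.swap_apply_right, ha, hb, Equiv.swap_apply_right]
  · rw [Equiv.swap_apply_of_ne_of_ne hja hjb, Equiv.swap_apply_of_ne_of_ne]
    · intro h; exact hja (σ.injective (h.trans ha.symm))
    · intro h; exact hjb (σ.injective (h.trans hb.symm))

lemma swap_comm_of_swap {a b : Fin n} (σ : Perm (Fin n)) (ha : σ a = b) (hb : σ b = a) :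
    σ * Equiv.swap a b = Equiv.swap a b * σ := by
  ext j
  simp only [Equiv.Perm.mul_apply]
  rcases eq_or_ne j a with rfl | hja
  · rw [Equiv.swap_apply_left, hb, ha, Equiv.swap_apply_right]
  rcases eq_or_ne j b with rfl | hjb
  · rw [Equiv.swap_apply_right, ha, hb, Equiv.swap_apply_left]
  · rw [Equiv.swap_apply_of_ne_of_ne hja hjb, Equiv.swap_apply_of_ne_of_ne]
    · intro h; exact hjb (σ.injective (h.trans hb.symm))
    · intro h; exact hja (σ.injective (h.trans ha.symm))

/-! #### absolute involutions -/

lemma pp {v : WreathG 2 n} (h : WreathG.IsAbsInv v) (i : Fin n) : v.p (v.p i) = i := by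
  have h1 : v.p * v.p = 1 := by rw [← sq]; exact h.1
  calc v.p (v.p i) = (v.p * v.p) i := rfl
    _ = i := by rw [h1]; rfl

lemma zp {v : WreathG 2 n} (h : WreathG.IsAbsInv v) (i : Fin n) : v.z (v.p i) = v.z i :=
  congrFun h.2 i

/-! #### fixedness under absolute conjugation, componentwise -/

lemma perm_inv_apply_self (f : Perm (Fin n)) (x : Fin n) : f⁻¹ (f x) = x :=
  f.symm_apply_apply x

lemma perm_apply_inv_self (f : Perm (Fin n)) (x : Fin n) : f (f⁻¹ x) = x :=
  f.apply_symm_apply x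

lemma aconj_z {τ : Perm (Fin n)} {v : WreathG 2 n} (h : WreathG.aconj τ v = v) (i : Fin n) :
    v.z (τ⁻¹ i) = v.z i :=
  congrFun (congrArg WreathG.z h) i

lemma aconj_z' {τ : Perm (Fin n)} {v : WreathG 2 n} (h : WreathG.aconj τ v = v) (i : Fin n) :
    v.z (τ i) = v.z i := by
  have := aconj_z h (τ i)
  rw [perm_inv_apply_self] at this
  exact this.symm

lemma aconj_p {τ : Perm (Fin n)} {v : WreathG 2 n} (h : WreathG.aconj τ v = v) :
    τ * v.p * τ⁻¹ = v.p :=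
  congrArg WreathG.p h

lemma aconj_p' {τ : Perm (Fin n)} {v : WreathG 2 n} (h : WreathG.aconj τ v = v) (i : Fin n) :
    v.p (τ i) = τ (v.p i) := by
  conv_lhs => rw [← aconj_p h]
  simp [Equiv.Perm.mul_apply]

lemma aconj_ext {τ : Perm (Fin n)} {v : WreathG 2 n}
    (hz : ∀ i, v.z (τ⁻¹ i) = v.z i) (hp : τ * v.p * τ⁻¹ = v.p) :
    WreathG.aconj τ v = v := by
  refine WreathG.ext ?_ hp
  funext i
  exact hz i


/-! #### the pairing identity -/

lemma pairing_conj (g x v w : WreathG 2 n) (hvfix : WreathG.aconj g.p v = v)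
    (hw : ∀ i, w.z i = v.z (x.p i)) :
    WreathG.pairing (x⁻¹ * g * x) w = WreathG.pairing g v := by
  unfold WreathG.pairing
  rw [← Equiv.sum_comp x.p.symm (fun i => (x⁻¹ * g * x).z i * w.z i)]
  have step : ∀ j : Fin n, (x⁻¹ * g * x).z (x.p.symm j) * w.z (x.p.symm j)
      = (-x.z j + g.z j + x.z (g.p⁻¹ j)) * v.z j := by
    intro j
    rw [conj_z_apply, hw, Equiv.apply_symm_apply]
  rw [Finset.sum_congr rfl fun j _ => step j]
  have expand : ∀ j : Fin n, (-x.z j + g.z j + x.z (g.p⁻¹ j)) * v.z j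
      = g.z j * v.z j + (x.z (g.p⁻¹ j) * v.z (g.p⁻¹ j) - x.z j * v.z j) := by
    intro j
    rw [show v.z (g.p⁻¹ j) = v.z j from aconj_z hvfix j]
    ring
  rw [Finset.sum_congr rfl fun j _ => expand j, Finset.sum_add_distrib,
    Finset.sum_sub_distrib,
    Equiv.sum_comp (g.p⁻¹ : Equiv.Perm (Fin n)) (fun j => x.z j * v.z j)]
  simp

/-! #### the color-flip involution -/

def flip (b : Fin n) (v : AbsInv 2 n) : AbsInv 2 n :=
  ⟨⟨v.1.z + fun i => if i = b ∨ i = v.1.p b then 1 else 0, v.1.p⟩, by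
    constructor
    · exact v.2.1
    · funext i
      simp only [Pi.add_apply, Function.comp_apply]
      rw [zp v.2 i]
      congr 1
      have hiff : (v.1.p i = b ∨ v.1.p i = v.1.p b) ↔ (i = b ∨ i = v.1.p b) := by
        constructor
        · rintro (h | h)
          · exact Or.inr (by rw [← h, pp v.2])
          · exact Or.inl (v.1.p.injective h)
        · rintro (rfl | rfl)
          · exact Or.inr rfl
          · exact Or.inl (pp v.2 b)
      simp only [hiff]⟩

@[simp] lemma flip_p (b : Fin n) (v : AbsInv 2 n) : (flip b v).1.p = v.1.p := rfl

lemma flip_z (b : Fin n) (v : AbsInv 2 n) (i : Fin n) :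
    (flip b v).1.z i = v.1.z i + if i = b ∨ i = v.1.p b then 1 else 0 := rfl

lemma flip_flip (b : Fin n) (v : AbsInv 2 n) : flip b (flip b v) = v := by
  refine Subtype.ext (WreathG.ext ?_ rfl)
  funext i
  rw [flip_z, flip_z, flip_p, add_assoc, zmod2_add_self, add_zero]

lemma flip_ne (b : Fin n) (v : AbsInv 2 n) : flip b v ≠ v := by
  intro h
  have h2 : (flip b v).1.z b = v.1.z b := by rw [h]
  rw [flip_z, if_pos (Or.inl rfl)] at h2
  have h3 := add_left_cancel (h2.trans (add_zero (v.1.z b)).symm)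
  exact one_ne_zero h3

lemma pairing_flip (b : Fin n) (g : WreathG 2 n) (v : AbsInv 2 n) (hfpf : v.1.p b ≠ b) :
    WreathG.pairing g (flip b v).1
      = WreathG.pairing g v.1 + (g.z b + g.z (v.1.p b)) := by
  unfold WreathG.pairing
  have step : ∀ i : Fin n, g.z i * (flip b v).1.z i
      = g.z i * v.1.z i + ((if i = b then g.z i else 0) + (if i = v.1.p b then g.z i else 0)) := by
    intro i
    rw [flip_z, mul_add]
    congr 1
    rcases eq_or_ne i b with rfl | h1
    · rw [if_pos (Or.inl rfl), if_pos rfl, if_neg (fun h => hfpf h.symm), mul_one, add_zero]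
    · rcases eq_or_ne i (v.1.p b) with rfl | h2
      · rw [if_pos (Or.inr rfl), if_neg h1, if_pos rfl, mul_one, zero_add]
      · rw [if_neg (by tauto), if_neg h1, if_neg h2, mul_zero, add_zero]
  rw [Finset.sum_congr rfl fun i _ => step i, Finset.sum_add_distrib,
    Finset.sum_add_distrib, Finset.sum_ite_eq' Finset.univ b g.z,
    Finset.sum_ite_eq' Finset.univ (v.1.p b) g.z, if_pos (Finset.mem_univ _),
    if_pos (Finset.mem_univ _)]

lemma flip_fixed {b : Fin n} {g : WreathG 2 n} {v : AbsInv 2 n} (hgb : g.p b = b)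
    (hvfix : WreathG.aconj g.p v.1 = v.1) :
    WreathG.aconj g.p (flip b v).1 = (flip b v).1 := by
  apply aconj_ext
  · intro i
    show (v.1.z (g.p⁻¹ i) + if g.p⁻¹ i = b ∨ g.p⁻¹ i = v.1.p b then 1 else 0)
        = (v.1.z i + if i = b ∨ i = v.1.p b then 1 else 0)
    rw [aconj_z hvfix]
    congr 1
    have hiff : (g.p⁻¹ i = b ∨ g.p⁻¹ i = v.1.p b) ↔ (i = b ∨ i = v.1.p b) := by
      have hk : g.p (v.1.p b) = v.1.p b := by
        rw [← aconj_p' hvfix b, hgb]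
      constructor
      · rintro (h | h)
        · left
          rw [← perm_apply_inv_self g.p i, h, hgb]
        · right
          rw [← perm_apply_inv_self g.p i, h, hk]
      · rintro (rfl | rfl)
        · left
          conv_lhs => rw [← hgb]
          rw [perm_inv_apply_self]
        · right
          conv_lhs => rw [← hk, perm_inv_apply_self]
    simp only [hiff]
  · show g.p * v.1.p * g.p⁻¹ = v.1.p
    exact aconj_p hvfix

/-! #### the sum splitting -/

lemma sum_split (b : Fin n) (g : WreathG 2 n) (hgb : g.p b = b) (hgzb : g.z b = 0) :
    ∑ v ∈ Finset.univ.filter (fun v : AbsInv 2 n =>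
        (∀ j, v.1.p j ≠ j) ∧ WreathG.aconj g.p v.1 = v.1),
      negOnePow2 (WreathG.pairing g v.1)
    = 2 * ∑ v ∈ Finset.univ.filter (fun v : AbsInv 2 n =>
        (∀ j, v.1.p j ≠ j) ∧ WreathG.aconj g.p v.1 = v.1 ∧
          v.1.z b = 0 ∧ g.z (v.1.p b) = 0),
      negOnePow2 (WreathG.pairing g v.1) := by
  classical
  rw [← Finset.sum_filter_add_sum_filter_not
    (Finset.univ.filter (fun v : AbsInv 2 n =>
        (∀ j, v.1.p j ≠ j) ∧ WreathG.aconj g.p v.1 = v.1))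
    (fun v => g.z (v.1.p b) = 0)]
  have hbad : ∑ v ∈ (Finset.univ.filter (fun v : AbsInv 2 n =>
      (∀ j, v.1.p j ≠ j) ∧ WreathG.aconj g.p v.1 = v.1)).filter
        (fun v => ¬ g.z (v.1.p b) = 0),
      negOnePow2 (WreathG.pairing g v.1) = 0 := by
    apply Finset.sum_involution (fun v _ => flip b v)
    · intro v hv
      simp only [Finset.mem_filter, Finset.mem_univ, true_and] at hv
      obtain ⟨⟨hfpf, hfix⟩, hgz⟩ := hv
      rw [pairing_flip b g v (hfpf b), hgzb, zero_add, zmod2_eq_one_of_ne hgz,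
        negOnePow2_add_one]
      ring
    · intro v _ _
      exact flip_ne b v
    · intro v hv
      simp only [Finset.mem_filter, Finset.mem_univ, true_and] at hv ⊢
      obtain ⟨⟨hfpf, hfix⟩, hgz⟩ := hv
      exact ⟨⟨hfpf, flip_fixed hgb hfix⟩, hgz⟩
    · intro v _
      exact flip_flip b v
  rw [hbad, add_zero]
  -- now split the good part by the color at b
  rw [← Finset.sum_filter_add_sum_filter_not
    ((Finset.univ.filter (fun v : AbsInv 2 n =>
        (∀ j, v.1.p j ≠ j) ∧ WreathG.aconj g.p v.1 = v.1)).filter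
      (fun v => g.z (v.1.p b) = 0))
    (fun v => v.1.z b = 0)]
  have hset : ((Finset.univ.filter (fun v : AbsInv 2 n =>
        (∀ j, v.1.p j ≠ j) ∧ WreathG.aconj g.p v.1 = v.1)).filter
      (fun v => g.z (v.1.p b) = 0)).filter (fun v => v.1.z b = 0)
      = Finset.univ.filter (fun v : AbsInv 2 n =>
        (∀ j, v.1.p j ≠ j) ∧ WreathG.aconj g.p v.1 = v.1 ∧
          v.1.z b = 0 ∧ g.z (v.1.p b) = 0) := by
    ext v
    simp only [Finset.mem_filter, Finset.mem_univ, true_and]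
    tauto
  rw [hset]
  have hswap : ∑ v ∈ ((Finset.univ.filter (fun v : AbsInv 2 n =>
        (∀ j, v.1.p j ≠ j) ∧ WreathG.aconj g.p v.1 = v.1)).filter
      (fun v => g.z (v.1.p b) = 0)).filter (fun v => ¬ v.1.z b = 0),
      negOnePow2 (WreathG.pairing g v.1)
      = ∑ v ∈ Finset.univ.filter (fun v : AbsInv 2 n =>
        (∀ j, v.1.p j ≠ j) ∧ WreathG.aconj g.p v.1 = v.1 ∧
          v.1.z b = 0 ∧ g.z (v.1.p b) = 0),
      negOnePow2 (WreathG.pairing g v.1) := by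
    apply Finset.sum_bij' (fun v _ => flip b v) (fun v _ => flip b v)
    · intro v hv
      simp only [Finset.mem_filter, Finset.mem_univ, true_and] at hv ⊢
      obtain ⟨⟨⟨hfpf, hfix⟩, hgz⟩, hzb⟩ := hv
      refine ⟨hfpf, flip_fixed hgb hfix, ?_, hgz⟩
      rw [flip_z, if_pos (Or.inl rfl), zmod2_eq_one_of_ne hzb, zmod2_add_self]
    · intro v hv
      simp only [Finset.mem_filter, Finset.mem_univ, true_and] at hv ⊢
      obtain ⟨hfpf, hfix, hzb, hgz⟩ := hv
      refine ⟨⟨⟨hfpf, flip_fixed hgb hfix⟩, hgz⟩, ?_⟩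
      rw [flip_z, if_pos (Or.inl rfl), hzb, zero_add]
      exact one_ne_zero
    · intro v _
      exact flip_flip b v
    · intro v _
      exact flip_flip b v
    · intro v hv
      simp only [Finset.mem_filter, Finset.mem_univ, true_and] at hv
      obtain ⟨⟨⟨hfpf, hfix⟩, hgz⟩, hzb⟩ := hv
      rw [pairing_flip b g v (hfpf b), hgzb, hgz, add_zero, add_zero]
  rw [hswap]
  ring


/-! #### counting the fibers -/

lemma card_ne (b : Fin n) : Fintype.card {j : Fin n // j ≠ b} = n - 1 := by
  rw [Fintype.card_subtype]
  have : Finset.univ.filter (fun j : Fin n => j ≠ b) = Finset.univ \ {b} := by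
    ext j; simp
  rw [this, Finset.card_sdiff_of_subset (by simp), Finset.card_singleton, Finset.card_univ,
    Fintype.card_fin]

lemma card_colors (b : Fin n) :
    Fintype.card {z : Fin n → ZMod 2 // z b = 0} = 2 ^ (n - 1) := by
  have e : {z : Fin n → ZMod 2 // z b = 0} ≃ ({j : Fin n // j ≠ b} → ZMod 2) :=
    { toFun := fun z j => z.1 j.1
      invFun := fun f => ⟨fun j => if h : j = b then 0 else f ⟨j, h⟩, by simp⟩
      left_inv := fun z => by
        ext j
        by_cases h : j = b
        · subst h; simp [z.2]
        · simp [h]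
      right_inv := fun f => by
        ext j
        simp [j.2] }
  rw [Fintype.card_congr e, Fintype.card_fun, card_ne]
  congr 1

lemma card_ne_two {a b : Fin n} (hab : a ≠ b) :
    Fintype.card {j : Fin n // j ≠ a ∧ j ≠ b} = n - 2 := by
  rw [Fintype.card_subtype]
  have : Finset.univ.filter (fun j : Fin n => j ≠ a ∧ j ≠ b) = Finset.univ \ {a, b} := by
    ext j; simp [not_or]
  rw [this, Finset.card_sdiff_of_subset (by simp), Finset.card_pair hab, Finset.card_univ,
    Fintype.card_fin]

lemma card_perms {a b : Fin n} (hab : a ≠ b) (k : Fin n) (hk : k ≠ b) :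
    Fintype.card {p : Equiv.Perm (Fin n) // p b = b ∧ p a = k} = (n - 2).factorial := by
  classical
  have e1 : {p : Equiv.Perm (Fin n) // p b = b ∧ p a = k}
      ≃ {p : Equiv.Perm (Fin n) // p b = b ∧ p a = a} :=
    { toFun := fun p => ⟨Equiv.swap a k * p.1, by
        constructor
        · show Equiv.swap a k (p.1 b) = b
          rw [p.2.1, Equiv.swap_apply_of_ne_of_ne hab.symm hk.symm]
        · show Equiv.swap a k (p.1 a) = a
          rw [p.2.2, Equiv.swap_apply_right]⟩
      invFun := fun p => ⟨Equiv.swap a k * p.1, by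
        constructor
        · show Equiv.swap a k (p.1 b) = b
          rw [p.2.1, Equiv.swap_apply_of_ne_of_ne hab.symm hk.symm]
        · show Equiv.swap a k (p.1 a) = k
          rw [p.2.2, Equiv.swap_apply_left]⟩
      left_inv := fun p => by
        ext1
        show Equiv.swap a k * (Equiv.swap a k * p.1) = p.1
        rw [← mul_assoc, Equiv.swap_mul_self, one_mul]
      right_inv := fun p => by
        ext1
        show Equiv.swap a k * (Equiv.swap a k * p.1) = p.1
        rw [← mul_assoc, Equiv.swap_mul_self, one_mul] }
  have e2 : {p : Equiv.Perm (Fin n) // p b = b ∧ p a = a}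
      ≃ {p : Equiv.Perm (Fin n) // ∀ j, ¬(j ≠ a ∧ j ≠ b) → p j = j} :=
    Equiv.subtypeEquivRight (by
      intro p
      constructor
      · rintro ⟨h1, h2⟩ j hj
        rcases not_and_or.mp hj with h | h
        · rw [not_ne_iff.mp h]; exact h2
        · rw [not_ne_iff.mp h]; exact h1
      · intro h
        exact ⟨h b (by simp), h a (by simp)⟩)
  rw [Fintype.card_congr (e1.trans e2),
    Fintype.card_congr (Equiv.Perm.subtypeEquivSubtypePerm
      (fun j : Fin n => j ≠ a ∧ j ≠ b)).symm, Fintype.card_perm, card_ne_two hab]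

lemma card_fib {a b : Fin n} (hab : a ≠ b) (k : Fin n) (hk : k ≠ b) :
    (Finset.univ.filter
        (fun x : WreathG 2 n => x.p b = b ∧ x.p a = k ∧ x.z b = 0)).card
      = 2 ^ (n - 1) * (n - 2).factorial := by
  classical
  rw [← Fintype.card_subtype]
  have e : {x : WreathG 2 n // x.p b = b ∧ x.p a = k ∧ x.z b = 0}
      ≃ {z : Fin n → ZMod 2 // z b = 0} × {p : Equiv.Perm (Fin n) // p b = b ∧ p a = k} :=
    { toFun := fun x => (⟨x.1.z, x.2.2.2⟩, ⟨x.1.p, x.2.1, x.2.2.1⟩)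
      invFun := fun y => ⟨⟨y.1.1, y.2.1⟩, y.2.2.1, y.2.2.2, y.1.2⟩
      left_inv := fun x => rfl
      right_inv := fun y => rfl }
  rw [Fintype.card_congr e, Fintype.card_prod, card_colors, card_perms hab k hk]


/-! #### the correspondence maps -/

def fwdV (a b : Fin n) (x w : WreathG 2 n) : WreathG 2 n :=
  ⟨w.z ∘ ⇑x.p.symm, x.p * (w.p * Equiv.swap a b) * x.p⁻¹⟩

def bwdW (a b : Fin n) (x v : WreathG 2 n) : WreathG 2 n :=
  ⟨v.z ∘ ⇑x.p, x.p⁻¹ * v.p * x.p * Equiv.swap a b⟩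

lemma fwdV_z (a b : Fin n) (x w : WreathG 2 n) (i : Fin n) :
    (fwdV a b x w).z i = w.z (x.p.symm i) := rfl

lemma fwdV_p (a b : Fin n) (x w : WreathG 2 n) :
    (fwdV a b x w).p = x.p * (w.p * Equiv.swap a b) * x.p⁻¹ := rfl

lemma bwdW_z (a b : Fin n) (x v : WreathG 2 n) (i : Fin n) :
    (bwdW a b x v).z i = v.z (x.p i) := rfl

lemma bwdW_p (a b : Fin n) (x v : WreathG 2 n) :
    (bwdW a b x v).p = x.p⁻¹ * v.p * x.p * Equiv.swap a b := rfl

lemma bwd_fwd (a b : Fin n) (x w : WreathG 2 n) : bwdW a b x (fwdV a b x w) = w := by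
  refine WreathG.ext ?_ ?_
  · funext i
    show w.z (x.p.symm (x.p i)) = w.z i
    rw [Equiv.symm_apply_apply]
  · show x.p⁻¹ * (x.p * (w.p * Equiv.swap a b) * x.p⁻¹) * x.p * Equiv.swap a b = w.p
    have h : x.p⁻¹ * (x.p * (w.p * Equiv.swap a b) * x.p⁻¹) * x.p
        = w.p * Equiv.swap a b := by group
    rw [h, mul_assoc, Equiv.swap_mul_self, mul_one]

lemma fwd_bwd (a b : Fin n) (x v : WreathG 2 n) : fwdV a b x (bwdW a b x v) = v := by
  refine WreathG.ext ?_ ?_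
  · funext i
    show v.z (x.p (x.p.symm i)) = v.z i
    rw [Equiv.apply_symm_apply]
  · show x.p * (x.p⁻¹ * v.p * x.p * Equiv.swap a b * Equiv.swap a b) * x.p⁻¹ = v.p
    rw [mul_assoc (x.p⁻¹ * v.p * x.p), Equiv.swap_mul_self, mul_one]
    group

/-! #### forward direction -/

lemma fwd_grand {a b : Fin n} (hab : a ≠ b) (g x w : WreathG 2 n)
    (hgb : g.p b = b) (hxb : x.p b = b)
    (hW : WreathG.IsAbsInv w)
    (hwpa : w.p a = a) (hwpb : w.p b = b) (hwza : w.z a = 0) (hwzb : w.z b = 0)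
    (hwf : ∀ j, j ≠ a → j ≠ b → w.p j ≠ j)
    (hwfix : WreathG.aconj (x⁻¹ * g * x).p w = w)
    (hhpa : (x⁻¹ * g * x).p a = a) (hhza : (x⁻¹ * g * x).z a = 0) :
    WreathG.IsAbsInv (fwdV a b x w)
    ∧ (∀ j, (fwdV a b x w).p j ≠ j)
    ∧ WreathG.aconj g.p (fwdV a b x w) = fwdV a b x w
    ∧ (fwdV a b x w).z b = 0
    ∧ (fwdV a b x w).p b = x.p a
    ∧ g.z ((fwdV a b x w).p b) = 0 := by
  have hxib : x.p⁻¹ b = b := by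
    conv_lhs => rw [← hxb]
    rw [perm_inv_apply_self]
  have hua : (w.p * Equiv.swap a b) a = b := by
    show w.p (Equiv.swap a b a) = b
    rw [Equiv.swap_apply_left, hwpb]
  have hub : (w.p * Equiv.swap a b) b = a := by
    show w.p (Equiv.swap a b b) = a
    rw [Equiv.swap_apply_right, hwpa]
  have huj : ∀ j, j ≠ a → j ≠ b → (w.p * Equiv.swap a b) j = w.p j := by
    intro j h1 h2
    show w.p (Equiv.swap a b j) = w.p j
    rw [Equiv.swap_apply_of_ne_of_ne h1 h2]
  have hcomm : w.p * Equiv.swap a b = Equiv.swap a b * w.p :=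
    swap_comm_of_fix w.p hwpa hwpb
  have hwp2 : w.p * w.p = 1 := by rw [← sq]; exact hW.1
  have huu : (w.p * Equiv.swap a b) * (w.p * Equiv.swap a b) = 1 := by
    calc (w.p * Equiv.swap a b) * (w.p * Equiv.swap a b)
        = w.p * (Equiv.swap a b * w.p) * Equiv.swap a b := by group
      _ = w.p * (w.p * Equiv.swap a b) * Equiv.swap a b := by rw [← hcomm]
      _ = (w.p * w.p) * (Equiv.swap a b * Equiv.swap a b) := by group
      _ = 1 := by rw [hwp2, Equiv.swap_mul_self, one_mul]
  have hufix : ∀ j, (w.p * Equiv.swap a b) j ≠ j := by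
    intro j
    rcases eq_or_ne j a with rfl | h1
    · rw [hua]; exact hab.symm
    rcases eq_or_ne j b with rfl | h2
    · rw [hub]; exact hab
    · rw [huj j h1 h2]; exact hwf j h1 h2
  have hVp : ∀ i, (fwdV a b x w).p i = x.p ((w.p * Equiv.swap a b) (x.p⁻¹ i)) :=
    fun i => rfl
  have hwzu : ∀ j, w.z ((w.p * Equiv.swap a b) j) = w.z j := by
    intro j
    rcases eq_or_ne j a with rfl | h1
    · rw [hua, hwzb, hwza]
    rcases eq_or_ne j b with rfl | h2
    · rw [hub, hwza, hwzb]
    · rw [huj j h1 h2]; exact zp hW j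
  have habs : WreathG.IsAbsInv (fwdV a b x w) := by
    constructor
    · rw [fwdV_p, sq]
      calc x.p * (w.p * Equiv.swap a b) * x.p⁻¹ * (x.p * (w.p * Equiv.swap a b) * x.p⁻¹)
          = x.p * ((w.p * Equiv.swap a b) * (w.p * Equiv.swap a b)) * x.p⁻¹ := by group
        _ = 1 := by rw [huu]; group
    · funext i
      show w.z (x.p.symm ((fwdV a b x w).p i)) = w.z (x.p.symm i)
      rw [hVp i]
      have h1 : x.p.symm (x.p ((w.p * Equiv.swap a b) (x.p⁻¹ i)))
          = (w.p * Equiv.swap a b) (x.p.symm i) := by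
        rw [Equiv.symm_apply_apply]; rfl
      rw [h1, hwzu]
  have hfpf : ∀ j, (fwdV a b x w).p j ≠ j := by
    intro j hj
    rw [hVp j] at hj
    apply hufix (x.p⁻¹ j)
    have : x.p ((w.p * Equiv.swap a b) (x.p⁻¹ j)) = x.p (x.p⁻¹ j) := by
      rw [hj, perm_apply_inv_self]
    exact x.p.injective this
  have hhpb : (x⁻¹ * g * x).p b = b := by
    rw [conj_p_apply, hxb, hgb, hxib]
  have hwfp := aconj_p hwfix
  have hcommh : (x⁻¹ * g * x).p * Equiv.swap a b = Equiv.swap a b * (x⁻¹ * g * x).p :=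
    swap_comm_of_fix _ hhpa hhpb
  have hufixh : (x⁻¹ * g * x).p * (w.p * Equiv.swap a b) * ((x⁻¹ * g * x).p)⁻¹
      = w.p * Equiv.swap a b := by
    calc (x⁻¹ * g * x).p * (w.p * Equiv.swap a b) * ((x⁻¹ * g * x).p)⁻¹
        = ((x⁻¹ * g * x).p * w.p * ((x⁻¹ * g * x).p)⁻¹)
          * ((x⁻¹ * g * x).p * Equiv.swap a b * ((x⁻¹ * g * x).p)⁻¹) := by group
      _ = w.p * ((x⁻¹ * g * x).p * Equiv.swap a b * ((x⁻¹ * g * x).p)⁻¹) := by rw [hwfp]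
      _ = w.p * (Equiv.swap a b * (x⁻¹ * g * x).p * ((x⁻¹ * g * x).p)⁻¹) := by rw [hcommh]
      _ = w.p * Equiv.swap a b := by group
  have hfix : WreathG.aconj g.p (fwdV a b x w) = fwdV a b x w := by
    apply aconj_ext
    · intro i
      show w.z (x.p.symm (g.p⁻¹ i)) = w.z (x.p.symm i)
      have h2 : ((x⁻¹ * g * x).p)⁻¹ (x.p.symm i) = x.p.symm (g.p⁻¹ i) := by
        rw [conj_p]
        simp [Equiv.Perm.mul_apply, mul_inv_rev, Equiv.Perm.inv_def]
      rw [← h2]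
      exact aconj_z hwfix (x.p.symm i)
    · show g.p * (fwdV a b x w).p * g.p⁻¹ = (fwdV a b x w).p
      rw [fwdV_p]
      have h3 : g.p * (x.p * (w.p * Equiv.swap a b) * x.p⁻¹) * g.p⁻¹
          = x.p * ((x.p⁻¹ * g.p * x.p) * (w.p * Equiv.swap a b)
            * (x.p⁻¹ * g.p * x.p)⁻¹) * x.p⁻¹ := by group
      rw [h3, ← conj_p, hufixh]
  have hzb : (fwdV a b x w).z b = 0 := by
    show w.z (x.p.symm b) = 0
    have : x.p.symm b = b := hxib
    rw [this, hwzb]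
  have hpb : (fwdV a b x w).p b = x.p a := by
    rw [hVp b, hxib, hub]
  have hgz : g.z ((fwdV a b x w).p b) = 0 := by
    rw [hpb]
    have hgpxa : g.p (x.p a) = x.p a := by
      have h5 := hhpa
      rw [conj_p_apply] at h5
      have h6 := congrArg x.p h5
      rwa [perm_apply_inv_self] at h6
    have hgpinv : g.p⁻¹ (x.p a) = x.p a := by
      conv_lhs => rw [← hgpxa]
      rw [perm_inv_apply_self]
    have h4 := hhza
    rw [conj_z_apply, hgpinv] at h4
    have h7 : g.z (x.p a) = -x.z (x.p a) + g.z (x.p a) + x.z (x.p a) := by ring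
    rw [h7, h4]
  exact ⟨habs, hfpf, hfix, hzb, hpb, hgz⟩

/-! #### backward direction -/

lemma bwd_grand {a b : Fin n} (hab : a ≠ b) (g v x : WreathG 2 n)
    (hgb : g.p b = b) (hgzb : g.z b = 0)
    (hV : WreathG.IsAbsInv v) (hvf : ∀ j, v.p j ≠ j) (hvfix : WreathG.aconj g.p v = v)
    (hvzb : v.z b = 0) (hgzk : g.z (v.p b) = 0)
    (hxb : x.p b = b) (hxa : x.p a = v.p b) (hxz : x.z b = 0) :
    WreathG.IsAbsInv (bwdW a b x v)
    ∧ ((bwdW a b x v).p a = a ∧ (bwdW a b x v).p b = b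
        ∧ (bwdW a b x v).z a = 0 ∧ (bwdW a b x v).z b = 0)
    ∧ (∀ j, j ≠ a → j ≠ b → (bwdW a b x v).p j ≠ j)
    ∧ WreathG.aconj (x⁻¹ * g * x).p (bwdW a b x v) = bwdW a b x v
    ∧ ((x⁻¹ * g * x).p a = a ∧ (x⁻¹ * g * x).p b = b
        ∧ (x⁻¹ * g * x).z a = 0 ∧ (x⁻¹ * g * x).z b = 0) := by
  have hxib : x.p⁻¹ b = b := by
    conv_lhs => rw [← hxb]
    rw [perm_inv_apply_self]
  have hkb : g.p (v.p b) = v.p b := by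
    have := aconj_p' hvfix b
    rw [hgb] at this
    exact this.symm
  have hkinv : g.p⁻¹ (v.p b) = v.p b := by
    conv_lhs => rw [← hkb]
    rw [perm_inv_apply_self]
  have hu'apply : ∀ t, (x.p⁻¹ * v.p * x.p) t = x.p⁻¹ (v.p (x.p t)) := fun t => rfl
  have hu'a : (x.p⁻¹ * v.p * x.p) a = b := by
    rw [hu'apply, hxa, pp hV, hxib]
  have hu'b : (x.p⁻¹ * v.p * x.p) b = a := by
    rw [hu'apply, hxb, ← hxa, perm_inv_apply_self]
  have hcomm' : (x.p⁻¹ * v.p * x.p) * Equiv.swap a b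
      = Equiv.swap a b * (x.p⁻¹ * v.p * x.p) :=
    swap_comm_of_swap _ hu'a hu'b
  have hvp2 : v.p * v.p = 1 := by rw [← sq]; exact hV.1
  have hu'u' : (x.p⁻¹ * v.p * x.p) * (x.p⁻¹ * v.p * x.p) = 1 := by
    calc (x.p⁻¹ * v.p * x.p) * (x.p⁻¹ * v.p * x.p)
        = x.p⁻¹ * (v.p * v.p) * x.p := by group
      _ = 1 := by rw [hvp2]; group
  have hWp : ∀ j, (bwdW a b x v).p j = (x.p⁻¹ * v.p * x.p) (Equiv.swap a b j) :=
    fun j => rfl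
  have hWpa : (bwdW a b x v).p a = a := by
    rw [hWp, Equiv.swap_apply_left, hu'b]
  have hWpb : (bwdW a b x v).p b = b := by
    rw [hWp, Equiv.swap_apply_right, hu'a]
  have hxu : ∀ t, x.p ((x.p⁻¹ * v.p * x.p) t) = v.p (x.p t) := by
    intro t
    rw [hu'apply, perm_apply_inv_self]
  have habs : WreathG.IsAbsInv (bwdW a b x v) := by
    constructor
    · rw [bwdW_p, sq]
      calc x.p⁻¹ * v.p * x.p * Equiv.swap a b * (x.p⁻¹ * v.p * x.p * Equiv.swap a b)
          = (x.p⁻¹ * v.p * x.p) * ((Equiv.swap a b * (x.p⁻¹ * v.p * x.p)) * Equiv.swap a b) := by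
            group
        _ = (x.p⁻¹ * v.p * x.p) * (((x.p⁻¹ * v.p * x.p) * Equiv.swap a b) * Equiv.swap a b) := by
            rw [← hcomm']
        _ = ((x.p⁻¹ * v.p * x.p) * (x.p⁻¹ * v.p * x.p)) * (Equiv.swap a b * Equiv.swap a b) := by
            group
        _ = 1 := by rw [hu'u', Equiv.swap_mul_self, one_mul]
    · funext j
      show v.z (x.p ((bwdW a b x v).p j)) = v.z (x.p j)
      rw [hWp, hxu, zp hV]
      rcases eq_or_ne j a with rfl | h1
      · rw [Equiv.swap_apply_left, hxb, hxa, zp hV]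
      rcases eq_or_ne j b with rfl | h2
      · rw [Equiv.swap_apply_right, hxa, hxb, zp hV]
      · rw [Equiv.swap_apply_of_ne_of_ne h1 h2]
  have hWza : (bwdW a b x v).z a = 0 := by
    show v.z (x.p a) = 0
    rw [hxa, zp hV, hvzb]
  have hWzb : (bwdW a b x v).z b = 0 := by
    show v.z (x.p b) = 0
    rw [hxb, hvzb]
  have hWf : ∀ j, j ≠ a → j ≠ b → (bwdW a b x v).p j ≠ j := by
    intro j h1 h2 hj
    rw [hWp, Equiv.swap_apply_of_ne_of_ne h1 h2] at hj
    have h3 := congrArg x.p hj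
    rw [hxu] at h3
    exact hvf (x.p j) h3
  have hhpb : (x⁻¹ * g * x).p b = b := by
    rw [conj_p_apply, hxb, hgb, hxib]
  have hhpa : (x⁻¹ * g * x).p a = a := by
    rw [conj_p_apply, hxa, hkb, ← hxa, perm_inv_apply_self]
  have hgbinv : g.p⁻¹ b = b := by
    conv_lhs => rw [← hgb]
    rw [perm_inv_apply_self]
  have hhzb : (x⁻¹ * g * x).z b = 0 := by
    rw [conj_z_apply, hxb, hgbinv, hgzb]
    ring
  have hhza : (x⁻¹ * g * x).z a = 0 := by
    rw [conj_z_apply, hxa, hkinv, hgzk]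
    ring
  have hcommh : (x⁻¹ * g * x).p * Equiv.swap a b = Equiv.swap a b * (x⁻¹ * g * x).p :=
    swap_comm_of_fix _ hhpa hhpb
  have hfixW : WreathG.aconj (x⁻¹ * g * x).p (bwdW a b x v) = bwdW a b x v := by
    apply aconj_ext
    · intro i
      show v.z (x.p (((x⁻¹ * g * x).p)⁻¹ i)) = v.z (x.p i)
      have h2 : ((x⁻¹ * g * x).p)⁻¹ i = x.p⁻¹ (g.p⁻¹ (x.p i)) := by
        rw [conj_p]
        simp [Equiv.Perm.mul_apply, mul_inv_rev]
      rw [h2, perm_apply_inv_self, aconj_z hvfix]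
    · show (x⁻¹ * g * x).p * (bwdW a b x v).p * ((x⁻¹ * g * x).p)⁻¹ = (bwdW a b x v).p
      rw [bwdW_p]
      have hconju : (x⁻¹ * g * x).p * (x.p⁻¹ * v.p * x.p) * ((x⁻¹ * g * x).p)⁻¹
          = x.p⁻¹ * v.p * x.p := by
        rw [conj_p]
        have h4 : (x.p⁻¹ * g.p * x.p) * (x.p⁻¹ * v.p * x.p) * (x.p⁻¹ * g.p * x.p)⁻¹
            = x.p⁻¹ * (g.p * v.p * g.p⁻¹) * x.p := by group
        rw [h4, aconj_p hvfix]
      calc (x⁻¹ * g * x).p * (x.p⁻¹ * v.p * x.p * Equiv.swap a b) * ((x⁻¹ * g * x).p)⁻¹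
          = ((x⁻¹ * g * x).p * (x.p⁻¹ * v.p * x.p) * ((x⁻¹ * g * x).p)⁻¹)
            * ((x⁻¹ * g * x).p * Equiv.swap a b * ((x⁻¹ * g * x).p)⁻¹) := by group
        _ = (x.p⁻¹ * v.p * x.p) * ((x⁻¹ * g * x).p * Equiv.swap a b * ((x⁻¹ * g * x).p)⁻¹) := by
            rw [hconju]
        _ = (x.p⁻¹ * v.p * x.p) * (Equiv.swap a b * (x⁻¹ * g * x).p * ((x⁻¹ * g * x).p)⁻¹) := by
            rw [hcommh]
        _ = x.p⁻¹ * v.p * x.p * Equiv.swap a b := by group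
  exact ⟨habs, ⟨hWpa, hWpb, hWza, hWzb⟩, hWf, hfixW, hhpa, hhpb, hhza, hhzb⟩


/-! #### total versions of the correspondence maps on absolute involutions -/

def fwdAbs (a b : Fin n) (x : WreathG 2 n) (w : AbsInv 2 n) : AbsInv 2 n :=
  if h : WreathG.IsAbsInv (fwdV a b x w.1) then ⟨fwdV a b x w.1, h⟩ else w

def bwdAbs (a b : Fin n) (x : WreathG 2 n) (v : AbsInv 2 n) : AbsInv 2 n :=
  if h : WreathG.IsAbsInv (bwdW a b x v.1) then ⟨bwdW a b x v.1, h⟩ else v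

lemma fwdAbs_of {a b : Fin n} {x : WreathG 2 n} {w : AbsInv 2 n}
    (h : WreathG.IsAbsInv (fwdV a b x w.1)) : (fwdAbs a b x w).1 = fwdV a b x w.1 := by
  rw [fwdAbs, dif_pos h]

lemma bwdAbs_of {a b : Fin n} {x : WreathG 2 n} {v : AbsInv 2 n}
    (h : WreathG.IsAbsInv (bwdW a b x v.1)) : (bwdAbs a b x v).1 = bwdW a b x v.1 := by
  rw [bwdAbs, dif_pos h]

end Stmt7Aux

set_option maxHeartbeats 2000000 in
/-- For `g ∈ B_{2m−1}`, the character at `g` of the restriction to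
`B_{2m−1}` of the representation `φ` of `B_{2m}` on the span of the `C_v` with `v` a
fixed-point-free involution equals the character at `g` of the representation of
`B_{2m−1}` induced from the representation `φ` of `B_{2m−2}` on the span of the `C_w` with
`w` a fixed-point-free involution of `B_{2m−2}`. -/
theorem restriction_char_eq_induced_char_B (m : ℕ) (hm : 1 ≤ m)
    (g : WreathG 2 (2 * m))
    (hgp : g.p ⟨2 * m - 1, by omega⟩ = ⟨2 * m - 1, by omega⟩)
    (hgz : g.z ⟨2 * m - 1, by omega⟩ = 0) :
    ((2 : ℂ) ^ (2 * m - 2) * (Nat.factorial (2 * m - 2) : ℂ)) *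
      ∑ v ∈ Finset.univ.filter (fun v : AbsInv 2 (2 * m) =>
          (∀ j, v.1.p j ≠ j) ∧ WreathG.aconj g.p v.1 = v.1),
        negOnePow2 (WreathG.pairing g v.1)
    = ∑ x ∈ Finset.univ.filter (fun x : WreathG 2 (2 * m) =>
          (x.p ⟨2 * m - 1, by omega⟩ = ⟨2 * m - 1, by omega⟩ ∧
            x.z ⟨2 * m - 1, by omega⟩ = 0) ∧
          (∀ j : Fin (2 * m), 2 * m - 2 ≤ j.val →
            ((x⁻¹ * g * x).p j = j ∧ (x⁻¹ * g * x).z j = 0))),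
        ∑ w ∈ Finset.univ.filter (fun w : AbsInv 2 (2 * m) =>
            (∀ j : Fin (2 * m), 2 * m - 2 ≤ j.val → (w.1.p j = j ∧ w.1.z j = 0)) ∧
            (∀ j : Fin (2 * m), j.val < 2 * m - 2 → w.1.p j ≠ j) ∧
            WreathG.aconj (x⁻¹ * g * x).p w.1 = w.1),
          negOnePow2 (WreathG.pairing (x⁻¹ * g * x) w.1) := by
  classical
  let a : Fin (2 * m) := ⟨2 * m - 2, by omega⟩
  let b : Fin (2 * m) := ⟨2 * m - 1, by omega⟩
  have hav : a.val = 2 * m - 2 := rfl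
  have hbv : b.val = 2 * m - 1 := rfl
  have hab : a ≠ b := by
    intro h
    rw [Fin.ext_iff, hav, hbv] at h
    omega
  have hsplit : ∀ j : Fin (2 * m), 2 * m - 2 ≤ j.val → j = a ∨ j = b := by
    intro j hj
    have hj2 := j.isLt
    rcases Nat.lt_or_ge j.val (2 * m - 1) with h | h
    · left; apply Fin.ext; rw [hav]; omega
    · right; apply Fin.ext; rw [hbv]; omega
  have hale : 2 * m - 2 ≤ a.val := by omega
  have hble : 2 * m - 2 ≤ b.val := by omega
  have hlt : ∀ j : Fin (2 * m), j ≠ a → j ≠ b → j.val < 2 * m - 2 := by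
    intro j h1 h2
    have hj2 := j.isLt
    rw [Ne, Fin.ext_iff, hav] at h1
    rw [Ne, Fin.ext_iff, hbv] at h2
    omega
  rw [Stmt7Aux.sum_split b g hgp hgz]
  trans (∑ v ∈ Finset.univ.filter (fun v : AbsInv 2 (2 * m) =>
      (∀ j, v.1.p j ≠ j) ∧ WreathG.aconj g.p v.1 = v.1 ∧
        v.1.z b = 0 ∧ g.z (v.1.p b) = 0),
    ((2 : ℂ) ^ (2 * m - 1) * ((2 * m - 2).factorial : ℂ)) *
      negOnePow2 (WreathG.pairing g v.1))
  · rw [← Finset.mul_sum]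
    have hpow : (2 : ℂ) ^ (2 * m - 1) = 2 ^ (2 * m - 2) * 2 := by
      rw [← pow_succ]
      congr 1
      omega
    rw [hpow]
    ring
  · have hinner : ∀ v ∈ Finset.univ.filter (fun v : AbsInv 2 (2 * m) =>
        (∀ j, v.1.p j ≠ j) ∧ WreathG.aconj g.p v.1 = v.1 ∧
          v.1.z b = 0 ∧ g.z (v.1.p b) = 0),
        ((2 : ℂ) ^ (2 * m - 1) * ((2 * m - 2).factorial : ℂ)) *
          negOnePow2 (WreathG.pairing g v.1)
          = ∑ _x ∈ Finset.univ.filter (fun x : WreathG 2 (2 * m) =>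
              x.p b = b ∧ x.p a = v.1.p b ∧ x.z b = 0),
            negOnePow2 (WreathG.pairing g v.1) := by
      intro v hv
      simp only [Finset.mem_filter, Finset.mem_univ, true_and] at hv
      rw [Finset.sum_const, Stmt7Aux.card_fib hab (v.1.p b) (hv.1 b),
        nsmul_eq_mul]
      push_cast
      ring
    rw [Finset.sum_congr rfl hinner, Finset.sum_sigma', Finset.sum_sigma']
    refine Finset.sum_bij'
      (fun q _ => ⟨q.2, Stmt7Aux.bwdAbs a b q.2 q.1⟩)
      (fun p _ => ⟨Stmt7Aux.fwdAbs a b p.1 p.2, p.1⟩) ?_ ?_ ?_ ?_ ?_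
    · -- hi : forward (bwd data) lands in the target sigma set
      rintro ⟨v, x⟩ hq
      rw [Finset.mem_sigma] at hq ⊢
      obtain ⟨hv, hx⟩ := hq
      simp only [Finset.mem_filter, Finset.mem_univ, true_and] at hv hx
      obtain ⟨hvf, hvfix, hvzb, hgzk⟩ := hv
      obtain ⟨hxb, hxa, hxz⟩ := hx
      have HH := Stmt7Aux.bwd_grand hab g v.1 x hgp hgz v.2 hvf hvfix hvzb hgzk hxb hxa hxz
      have habs := HH.1
      have hWpa := HH.2.1.1
      have hWpb := HH.2.1.2.1
      have hWza := HH.2.1.2.2.1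
      have hWzb := HH.2.1.2.2.2
      have hWf := HH.2.2.1
      have hfixW := HH.2.2.2.1
      have hhpa := HH.2.2.2.2.1
      have hhpb := HH.2.2.2.2.2.1
      have hhza := HH.2.2.2.2.2.2.1
      have hhzb := HH.2.2.2.2.2.2.2
      have hval : (Stmt7Aux.bwdAbs a b x v).1 = Stmt7Aux.bwdW a b x v.1 :=
        Stmt7Aux.bwdAbs_of habs
      constructor
      · simp only [Finset.mem_filter, Finset.mem_univ, true_and]
        refine ⟨⟨hxb, hxz⟩, ?_⟩
        intro j hj
        rcases hsplit j hj with rfl | rfl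
        · exact ⟨hhpa, hhza⟩
        · exact ⟨hhpb, hhzb⟩
      · simp only [Finset.mem_filter, Finset.mem_univ, true_and]
        rw [hval]
        refine ⟨?_, ?_, hfixW⟩
        · intro j hj
          rcases hsplit j hj with rfl | rfl
          · exact ⟨hWpa, hWza⟩
          · exact ⟨hWpb, hWzb⟩
        · intro j hj
          refine hWf j ?_ ?_
          · intro h; rw [h, hav] at hj; omega
          · intro h; rw [h, hbv] at hj; omega
    · -- hj : backward (fwd data) lands in the source sigma set
      rintro ⟨x, w⟩ hp
      rw [Finset.mem_sigma] at hp ⊢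
      obtain ⟨hx, hw⟩ := hp
      simp only [Finset.mem_filter, Finset.mem_univ, true_and] at hx hw
      obtain ⟨⟨hxb, hxz⟩, hxc⟩ := hx
      obtain ⟨hw1, hw2, hw3⟩ := hw
      have e1 : x.p b = b := hxb
      have e2 : w.1.p a = a := (hw1 a hale).1
      have e3 : w.1.p b = b := (hw1 b hble).1
      have e4 : w.1.z a = 0 := (hw1 a hale).2
      have e5 : w.1.z b = 0 := (hw1 b hble).2
      have e6 : (x⁻¹ * g * x).p a = a := (hxc a hale).1
      have e7 : (x⁻¹ * g * x).z a = 0 := (hxc a hale).2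
      have e8 : ∀ j, j ≠ a → j ≠ b → w.1.p j ≠ j := fun j h1 h2 => hw2 j (hlt j h1 h2)
      have HH := Stmt7Aux.fwd_grand hab g x w.1 hgp e1 w.2 e2 e3 e4 e5 e8 hw3 e6 e7
      have habs := HH.1
      have hfpf := HH.2.1
      have hfix := HH.2.2.1
      have hzb := HH.2.2.2.1
      have hpb := HH.2.2.2.2.1
      have hgzV := HH.2.2.2.2.2
      have hval : (Stmt7Aux.fwdAbs a b x w).1 = Stmt7Aux.fwdV a b x w.1 :=
        Stmt7Aux.fwdAbs_of habs
      constructor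
      · simp only [Finset.mem_filter, Finset.mem_univ, true_and]
        rw [hval]
        exact ⟨hfpf, hfix, hzb, hgzV⟩
      · simp only [Finset.mem_filter, Finset.mem_univ, true_and]
        rw [hval]
        exact ⟨hxb, hpb.symm, hxz⟩
    · -- left inverse
      rintro ⟨v, x⟩ hq
      rw [Finset.mem_sigma] at hq
      obtain ⟨hv, hx⟩ := hq
      simp only [Finset.mem_filter, Finset.mem_univ, true_and] at hv hx
      obtain ⟨hvf, hvfix, hvzb, hgzk⟩ := hv
      obtain ⟨hxb, hxa, hxz⟩ := hx
      have HH := Stmt7Aux.bwd_grand hab g v.1 x hgp hgz v.2 hvf hvfix hvzb hgzk hxb hxa hxz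
      have habs := HH.1
      have hvalB : (Stmt7Aux.bwdAbs a b x v).1 = Stmt7Aux.bwdW a b x v.1 :=
        Stmt7Aux.bwdAbs_of habs
      have h2 : Stmt7Aux.fwdV a b x (Stmt7Aux.bwdAbs a b x v).1 = v.1 := by
        rw [hvalB]
        exact Stmt7Aux.fwd_bwd a b x v.1
      have h3 : WreathG.IsAbsInv (Stmt7Aux.fwdV a b x (Stmt7Aux.bwdAbs a b x v).1) := by
        rw [h2]; exact v.2
      have h4 : Stmt7Aux.fwdAbs a b x (Stmt7Aux.bwdAbs a b x v) = v :=
        Subtype.ext (by rw [Stmt7Aux.fwdAbs_of h3, h2])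
      have h5 : (⟨Stmt7Aux.fwdAbs a b x (Stmt7Aux.bwdAbs a b x v), x⟩
          : Σ _ : AbsInv 2 (2 * m), WreathG 2 (2 * m)) = ⟨v, x⟩ := by
        rw [h4]
      exact h5
    · -- right inverse
      rintro ⟨x, w⟩ hp
      rw [Finset.mem_sigma] at hp
      obtain ⟨hx, hw⟩ := hp
      simp only [Finset.mem_filter, Finset.mem_univ, true_and] at hx hw
      obtain ⟨⟨hxb, hxz⟩, hxc⟩ := hx
      obtain ⟨hw1, hw2, hw3⟩ := hw
      have e1 : x.p b = b := hxb
      have e2 : w.1.p a = a := (hw1 a hale).1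
      have e3 : w.1.p b = b := (hw1 b hble).1
      have e4 : w.1.z a = 0 := (hw1 a hale).2
      have e5 : w.1.z b = 0 := (hw1 b hble).2
      have e6 : (x⁻¹ * g * x).p a = a := (hxc a hale).1
      have e7 : (x⁻¹ * g * x).z a = 0 := (hxc a hale).2
      have e8 : ∀ j, j ≠ a → j ≠ b → w.1.p j ≠ j := fun j h1 h2 => hw2 j (hlt j h1 h2)
      have HH := Stmt7Aux.fwd_grand hab g x w.1 hgp e1 w.2 e2 e3 e4 e5 e8 hw3 e6 e7
      have habs := HH.1
      have hvalF : (Stmt7Aux.fwdAbs a b x w).1 = Stmt7Aux.fwdV a b x w.1 :=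
        Stmt7Aux.fwdAbs_of habs
      have h2 : Stmt7Aux.bwdW a b x (Stmt7Aux.fwdAbs a b x w).1 = w.1 := by
        rw [hvalF]
        exact Stmt7Aux.bwd_fwd a b x w.1
      have h3 : WreathG.IsAbsInv (Stmt7Aux.bwdW a b x (Stmt7Aux.fwdAbs a b x w).1) := by
        rw [h2]; exact w.2
      have h4 : Stmt7Aux.bwdAbs a b x (Stmt7Aux.fwdAbs a b x w) = w :=
        Subtype.ext (by rw [Stmt7Aux.bwdAbs_of h3, h2])
      have h5 : (⟨x, Stmt7Aux.bwdAbs a b x (Stmt7Aux.fwdAbs a b x w)⟩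
          : Σ _ : WreathG 2 (2 * m), AbsInv 2 (2 * m)) = ⟨x, w⟩ := by
        rw [h4]
      exact h5
    · -- weights agree
      rintro ⟨v, x⟩ hq
      rw [Finset.mem_sigma] at hq
      obtain ⟨hv, hx⟩ := hq
      simp only [Finset.mem_filter, Finset.mem_univ, true_and] at hv hx
      obtain ⟨hvf, hvfix, hvzb, hgzk⟩ := hv
      obtain ⟨hxb, hxa, hxz⟩ := hx
      have HH := Stmt7Aux.bwd_grand hab g v.1 x hgp hgz v.2 hvf hvfix hvzb hgzk hxb hxa hxz
      have habs := HH.1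
      have hvalB : (Stmt7Aux.bwdAbs a b x v).1 = Stmt7Aux.bwdW a b x v.1 :=
        Stmt7Aux.bwdAbs_of habs
      show negOnePow2 (WreathG.pairing g v.1)
          = negOnePow2 (WreathG.pairing (x⁻¹ * g * x) (Stmt7Aux.bwdAbs a b x v).1)
      rw [hvalB]
      exact (congrArg negOnePow2
        (Stmt7Aux.pairing_conj g x v.1 (Stmt7Aux.bwdW a b x v.1) hvfix fun i => rfl)).symm
end
end
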